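/- arXiv:1611.01092 — 8 statements merged into one kernel-verified Lean document; each statement's English description precedes it below -/
import Mathlib

section
/- Let m ≥ 3 and let θ₁,…,θ_m be rational numbers with θ₁ + ⋯ + θ_m = 2. Call a tuple v = (v₁,…,v_m) of vectors in ℂ² θ-stable if for every ℂ-linear subspace W ⊆ ℂ² and every subset S ⊆ {1,…,m} such that vᵢ ∈ W for all i ∈ S, if (S,W) ≠ (∅,{0}) and (S,W) ≠ ({1,…,m},ℂ²), then ∑_{i∈S} θᵢ < dim_ℂ W. Then a θ-stable tuple v ∈ (ℂ²)^m exists if and only if 0 < θᵢ < 1 for every i = 1,…,m. -/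
/-- Lemma (Section 3), part (1): for the m-subspace quiver with dimension vector
(1,…,1;2) and stability θ = (θ₁,…,θ_m;−1) with θ₁+⋯+θ_m = 2, a θ-stable tuple of
vectors in ℂ² exists iff 0 < θᵢ < 1 for all i. -/
theorem stmt0 (m : ℕ) (hm : 3 ≤ m) (θ : Fin m → ℚ) (hsum : ∑ i, θ i = 2) :
    (∃ v : Fin m → (Fin 2 → ℂ),
      ∀ (W : Submodule ℂ (Fin 2 → ℂ)) (S : Finset (Fin m)),
        (∀ i ∈ S, v i ∈ W) →
        ¬(S = ∅ ∧ W = ⊥) → ¬(S = Finset.univ ∧ W = ⊤) →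
        ∑ i ∈ S, θ i < (Module.finrank ℂ W : ℚ)) ↔
    (∀ i, 0 < θ i ∧ θ i < 1) := by
  constructor
  · rintro ⟨v, hv⟩ i
    constructor
    · -- θ i > 0 from (univ.erase i, ⊤)
      have h := hv ⊤ (Finset.univ.erase i) (fun j _ => trivial)
        (by rintro ⟨-, h2⟩; exact absurd h2.symm bot_ne_top)
        (by rintro ⟨h1, -⟩
            have : i ∈ Finset.univ.erase i := by rw [h1]; exact Finset.mem_univ i
            simp at this)
      rw [show ((Module.finrank ℂ (⊤ : Submodule ℂ (Fin 2 → ℂ)) : ℚ)) = 2 by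
        norm_num [finrank_top]] at h
      have hs : ∑ j ∈ Finset.univ.erase i, θ j + θ i = 2 := by
        rw [Finset.sum_erase_add _ _ (Finset.mem_univ i), hsum]
      linarith
    · -- θ i < 1 from ({i}, span {v i})
      have hne : ({i} : Finset (Fin m)) ≠ Finset.univ := by
        intro h
        have := Finset.card_univ (α := Fin m) ▸ h ▸ Finset.card_singleton i
        simp at this; omega
      have h := hv (Submodule.span ℂ {v i}) {i}
        (by intro j hj; simp only [Finset.mem_singleton] at hj
            exact hj ▸ Submodule.mem_span_singleton_self _)
        (by rintro ⟨h1, -⟩; simp at h1)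
        (by rintro ⟨h1, -⟩; exact hne h1)
      rw [Finset.sum_singleton] at h
      have hr : Module.finrank ℂ (Submodule.span ℂ {v i}) ≤ 1 := by
        rcases eq_or_ne (v i) 0 with h0 | h0
        · rw [h0, Submodule.span_zero_singleton, finrank_bot]
          norm_num
        · rw [finrank_span_singleton h0]
      calc θ i < _ := h
        _ ≤ 1 := by exact_mod_cast hr
  · intro hθ
    set v : Fin m → (Fin 2 → ℂ) := fun i => ![1, (i : ℕ)] with hvdef
    have hv0 : ∀ i, v i ≠ 0 := by
      intro i h
      have := congrFun h 0
      simp [hvdef] at this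
    have hind : ∀ i j : Fin m, i ≠ j → LinearIndependent ℂ ![v i, v j] := by
      intro i j hij
      rw [LinearIndependent.pair_iff]
      intro s t hst
      have h0 := congrFun hst 0
      have h1 := congrFun hst 1
      simp [hvdef] at h0 h1
      have hij' : ((i : ℕ) : ℂ) ≠ ((j : ℕ) : ℂ) := by
        exact_mod_cast fun h => hij (Fin.ext (Nat.cast_injective h))
      have hs : s = 0 := by
        have : s * ((i : ℕ) : ℂ) - s * ((j : ℕ) : ℂ) = 0 := by
          have ht : t = -s := by linear_combination h0
          rw [ht] at h1; linear_combination h1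
        rcases mul_eq_zero.mp (by linear_combination this :
            s * (((i : ℕ) : ℂ) - ((j : ℕ) : ℂ)) = 0) with h | h
        · exact h
        · exact absurd (sub_eq_zero.mp h) hij'
      exact ⟨hs, by rw [hs] at h0; linear_combination h0⟩
    refine ⟨v, fun W S hmem hne1 hne2 => ?_⟩
    have hle : Module.finrank ℂ W ≤ 2 := by simpa using Submodule.finrank_le W
    interval_cases hr : Module.finrank ℂ W
    · -- finrank 0
      exfalso
      have hW : W = ⊥ := Submodule.finrank_eq_zero.mp hr
      refine hne1 ⟨?_, hW⟩
      ext j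
      simp only [Finset.notMem_empty, iff_false]
      intro hj
      exact hv0 j (by simpa [hW] using hmem j hj)
    · -- finrank 1
      rcases S.eq_empty_or_nonempty with rfl | ⟨i, hi⟩
      · simp
      · have hS : S = {i} := by
          ext j
          simp only [Finset.mem_singleton]
          constructor
          · intro hj
            by_contra hji
            have hspan : Submodule.span ℂ (Set.range ![v i, v j]) = ⊤ :=
              (hind i j (fun h => hji (h ▸ rfl))).span_eq_top_of_card_eq_finrank
                (by simp)
            have hsub : Submodule.span ℂ (Set.range ![v i, v j]) ≤ W := by
              rw [Submodule.span_le]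
              rintro x ⟨k, rfl⟩
              fin_cases k
              · exact hmem i hi
              · exact hmem j hj
            have : W = ⊤ := top_le_iff.mp (hspan ▸ hsub)
            rw [this, finrank_top] at hr
            simp at hr
          · rintro rfl; exact hi
        rw [hS, Finset.sum_singleton]
        exact_mod_cast (hθ i).2
    · -- finrank 2
      have hW : W = ⊤ := Submodule.eq_top_of_finrank_eq (by simp [hr])
      have hSne : S ≠ Finset.univ := fun h => hne2 ⟨h, hW⟩
      obtain ⟨j, hj⟩ : ∃ j, j ∉ S := by
        by_contra h
        push_neg at h
        exact hSne (Finset.eq_univ_of_forall h)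
      have : ∑ i ∈ S, θ i < ∑ i, θ i :=
        Finset.sum_lt_sum_of_subset S.subset_univ (Finset.mem_univ j) hj
          (hθ j).1 (fun k _ _ => (hθ k).1.le)
      rw [hsum] at this
      exact_mod_cast this
end

section
/- Let n ≥ 2 and let ε be a rational number with 0 < ε < (2n−1)/(n(n+1)). Define θ⁺₁ = 1/n + ε and θ⁺ᵢ = 1/n − ε/(2n−1) for i = 2,…,2n. Then: (i) for every non-empty proper subset I ⊆ {1,…,2n}, ∑_{i∈I} θ⁺ᵢ ≠ 1; (ii) for every subset I ⊆ {1,…,2n}, ∑_{i∈I} θ⁺ᵢ > 1 if and only if |I| > n, or |I| = n and 1 ∈ I. -/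
/-- Lemma 3.2 (θ⁺-part): with θ⁺₁ = 1/n + ε and θ⁺ᵢ = 1/n − ε/(2n−1) for i ≥ 2,
and 0 < ε < (2n−1)/(n(n+1)): (i) d = (1,…,1;2) is θ⁺-coprime, and (ii) a subset I
is θ⁺-forbidden iff |I| > n, or |I| = n and 1 ∈ I. -/
theorem stmt3 (n : ℕ) (hn : 2 ≤ n) (ε : ℚ) (hε0 : 0 < ε)
    (hε : ε < (2 * (n : ℚ) - 1) / ((n : ℚ) * ((n : ℚ) + 1)))
    (θ : Fin (2 * n) → ℚ)
    (hθ : ∀ i : Fin (2 * n),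
      θ i = if (i : ℕ) = 0 then 1 / (n : ℚ) + ε else 1 / (n : ℚ) - ε / (2 * (n : ℚ) - 1)) :
    (∀ I : Finset (Fin (2 * n)), I ≠ ∅ → I ≠ Finset.univ → ∑ i ∈ I, θ i ≠ 1) ∧
    (∀ I : Finset (Fin (2 * n)),
      1 < ∑ i ∈ I, θ i ↔
        (n < I.card ∨ (I.card = n ∧ (⟨0, by omega⟩ : Fin (2 * n)) ∈ I))) := by
  have hN : (2:ℚ) ≤ (n:ℚ) := by exact_mod_cast hn
  have hN0 : (0:ℚ) < (n:ℚ) := by linarith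
  have hD : (0:ℚ) < 2*(n:ℚ) - 1 := by linarith
  have hε' : ε * ((n:ℚ) * ((n:ℚ)+1)) < 2*(n:ℚ) - 1 := by
    rwa [lt_div_iff₀ (by positivity)] at hε
  set z : Fin (2*n) := ⟨0, by omega⟩ with hz
  -- sum formula
  have hsum : ∀ I : Finset (Fin (2*n)),
      ∑ i ∈ I, θ i = (I.card : ℚ) * (1/(n:ℚ) - ε/(2*(n:ℚ)-1))
        + (if z ∈ I then ε + ε/(2*(n:ℚ)-1) else 0) := by
    intro I
    have hcong : ∀ i ∈ I, θ i = (1/(n:ℚ) - ε/(2*(n:ℚ)-1))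
        + (if i = z then ε + ε/(2*(n:ℚ)-1) else 0) := by
      intro i _
      rw [hθ]
      by_cases h : (i:ℕ) = 0
      · have : i = z := by ext; simpa using h
        simp [this, h, hz]
        try ring
      · have : i ≠ z := by simp [Fin.ext_iff, hz, h]
        simp [this, h]
    rw [Finset.sum_congr rfl hcong, Finset.sum_add_distrib, Finset.sum_const,
      Finset.sum_ite_eq' I z, nsmul_eq_mul]
  -- arithmetic cases
  have caseA : ∀ K : ℚ, (n:ℚ) ≤ K → K ≤ 2*n →
      1 < K * (1/(n:ℚ) - ε/(2*(n:ℚ)-1)) + (ε + ε/(2*(n:ℚ)-1)) := by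
    intro K h1 h2
    have e : K * (1/(n:ℚ) - ε/(2*(n:ℚ)-1)) + (ε + ε/(2*(n:ℚ)-1))
        = (K*(2*n-1) - K*n*ε + 2*n*n*ε) / ((n:ℚ)*(2*n-1)) := by
      generalize hd : 2*(n:ℚ)-1 = d at hD ⊢; have := hD.ne'; field_simp; subst hd; ring
    rw [e, lt_div_iff₀ (by positivity)]
    have hb : 0 < 2*(n:ℚ)-1 - n*ε := by nlinarith
    nlinarith [mul_nonneg (by linarith : (0:ℚ) ≤ K - n) hb.le,
      mul_pos (mul_pos hN0 hN0) hε0]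
  have caseB : ∀ K : ℚ, (n:ℚ)+1 ≤ K →
      1 < K * (1/(n:ℚ) - ε/(2*(n:ℚ)-1)) := by
    intro K h1
    have e : K * (1/(n:ℚ) - ε/(2*(n:ℚ)-1)) = K*(2*n-1 - n*ε) / ((n:ℚ)*(2*n-1)) := by
      generalize hd : 2*(n:ℚ)-1 = d at hD ⊢; have := hD.ne'; field_simp
      try ring
    rw [e, lt_div_iff₀ (by positivity)]
    have hb : 0 < 2*(n:ℚ)-1 - n*ε := by nlinarith
    nlinarith [mul_le_mul_of_nonneg_right h1 hb.le, hε',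
      mul_pos (mul_pos hN0 hN0) hε0]
  have caseC : ∀ K : ℚ, 0 ≤ K → K ≤ (n:ℚ) →
      K * (1/(n:ℚ) - ε/(2*(n:ℚ)-1)) < 1 := by
    intro K h0 h1
    have e : K * (1/(n:ℚ) - ε/(2*(n:ℚ)-1)) = K*(2*n-1 - n*ε) / ((n:ℚ)*(2*n-1)) := by
      generalize hd : 2*(n:ℚ)-1 = d at hD ⊢; have := hD.ne'; field_simp
      try ring
    rw [e, div_lt_one (by positivity)]
    have hb : 0 < 2*(n:ℚ)-1 - n*ε := by nlinarith
    nlinarith [mul_le_mul_of_nonneg_right h1 hb.le,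
      mul_pos (mul_pos hN0 hN0) hε0]
  have caseD : ∀ K : ℚ, 0 ≤ K → K ≤ (n:ℚ)-1 →
      K * (1/(n:ℚ) - ε/(2*(n:ℚ)-1)) + (ε + ε/(2*(n:ℚ)-1)) < 1 := by
    intro K h0 h1
    have e : K * (1/(n:ℚ) - ε/(2*(n:ℚ)-1)) + (ε + ε/(2*(n:ℚ)-1))
        = (K*(2*n-1) - K*n*ε + 2*n*n*ε) / ((n:ℚ)*(2*n-1)) := by
      generalize hd : 2*(n:ℚ)-1 = d at hD ⊢; have := hD.ne'; field_simp; subst hd; ring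
    rw [e, div_lt_one (by positivity)]
    -- need: K(2n-1) + (2n-K)nε < n(2n-1); use ε(n)(n+1) < 2n-1
    nlinarith [mul_lt_mul_of_pos_left hε' (by linarith : (0:ℚ) < (n:ℚ) - K),
      mul_nonneg (mul_nonneg (mul_pos hN0 hN0).le hε0.le)
        (by linarith : (0:ℚ) ≤ (n:ℚ) - 1 - K)]
  -- card facts
  have cardU : (Finset.univ : Finset (Fin (2*n))).card = 2*n := by
    simp
  constructor
  · intro I hne hnu
    have hk1 : 1 ≤ I.card := Finset.card_pos.mpr (Finset.nonempty_iff_ne_empty.mpr hne)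
    have hk2 : I.card < 2*n := by
      have := Finset.card_lt_card (Finset.ssubset_univ_iff.mpr hnu)
      omega
    rw [hsum I]
    by_cases hzi : z ∈ I
    · simp only [hzi, if_true]
      rcases le_or_gt n I.card with h | h
      · refine ne_of_gt (caseA _ (by exact_mod_cast h) ?_)
        have h' : (I.card:ℚ) ≤ ((2*n : ℕ) : ℚ) := by exact_mod_cast hk2.le
        push_cast at h'; linarith
      · exact ne_of_lt (caseD _ (by positivity) (by
          have h' : (I.card:ℚ) + 1 ≤ (n:ℚ) := by exact_mod_cast h
          linarith))
    · simp only [hzi, if_false, add_zero]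
      rcases le_or_gt I.card n with h | h
      · exact ne_of_lt (caseC _ (by positivity) (by exact_mod_cast h))
      · exact ne_of_gt (caseB _ (by
          have : (n:ℚ)+1 ≤ (I.card:ℚ) := by exact_mod_cast h
          exact this))
  · intro I
    have hk2 : I.card ≤ 2*n := by
      have := Finset.card_le_card (Finset.subset_univ I)
      omega
    rw [hsum I]
    constructor
    · intro h
      by_contra hcon
      push_neg at hcon
      obtain ⟨h1, h2⟩ := hcon
      by_cases hzi : z ∈ I
      · have hklt : I.card < n := by
          rcases lt_or_eq_of_le h1 with h' | h'
          · exact h'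
          · exact absurd hzi (by simp_all)
        simp only [hzi, if_true] at h
        have := caseD (I.card : ℚ) (by positivity) (by
          have h' : (I.card:ℚ)+1 ≤ (n:ℚ) := by exact_mod_cast hklt
          linarith)
        linarith
      · simp only [hzi, if_false, add_zero] at h
        have := caseC (I.card : ℚ) (by positivity) (by exact_mod_cast h1)
        linarith
    · intro h
      by_cases hzi : z ∈ I
      · simp only [hzi, if_true]
        rcases h with h | ⟨h, _⟩
        · refine caseA _ (by exact_mod_cast h.le) ?_
          have h' : (I.card:ℚ) ≤ ((2*n : ℕ) : ℚ) := by exact_mod_cast hk2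
          push_cast at h'; linarith
        · refine caseA _ (le_of_eq (by exact_mod_cast h.symm)) ?_
          have h' : (I.card:ℚ) ≤ ((2*n : ℕ) : ℚ) := by exact_mod_cast hk2
          push_cast at h'; linarith
      · simp only [hzi, if_false, add_zero]
        rcases h with h | ⟨_, h⟩
        · exact caseB _ (by exact_mod_cast h)
        · exact absurd h hzi
end

section
/- Let m ≥ 1 and consider the polynomial ring ℚ[x₁,…,x_m,y₁,y₂]. Let S be the ℚ-subalgebra generated by all differences y_j − x_i (i = 1,…,m, j = 1,2) and all differences y₂ − y₁, y₁ − y₂, x_j − x_i, and let τ be the ℚ-algebra automorphism exchanging y₁ and y₂ and fixing each xᵢ. Set Xᵢ = (y₁+y₂)/2 − xᵢ for i = 1,…,m and Y = (y₁+y₂)²/4 − y₁y₂. Then the subring {f ∈ S : τ(f) = f} of τ-invariant elements of S equals the ℚ-subalgebra generated by X₁,…,X_m,Y, and the family (X₁,…,X_m,Y) is algebraically independent over ℚ. -/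
open MvPolynomial

noncomputable section

/-- The variable xᵢ in ℚ[x₁,…,x_m,y₁,y₂]. -/
def xv (m : ℕ) (i : Fin m) : MvPolynomial (Fin m ⊕ Fin 2) ℚ := X (Sum.inl i)

/-- The variable y_j in ℚ[x₁,…,x_m,y₁,y₂]. -/
def yv (m : ℕ) (j : Fin 2) : MvPolynomial (Fin m ⊕ Fin 2) ℚ := X (Sum.inr j)

/-- Xᵢ = (y₁+y₂)/2 − xᵢ. -/
def Xg (m : ℕ) (i : Fin m) : MvPolynomial (Fin m ⊕ Fin 2) ℚ :=
  C (1 / 2 : ℚ) * (yv m 0 + yv m 1) - xv m i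

/-- Y = (y₁+y₂)²/4 − y₁y₂. -/
def Yg (m : ℕ) : MvPolynomial (Fin m ⊕ Fin 2) ℚ :=
  C (1 / 4 : ℚ) * (yv m 0 + yv m 1) ^ 2 - yv m 0 * yv m 1

/-- The ℚ-subalgebra S generated by the differences y_j − xᵢ, y₂ − y₁, y₁ − y₂
and x_j − xᵢ. -/
def Ssub (m : ℕ) : Subalgebra ℚ (MvPolynomial (Fin m ⊕ Fin 2) ℚ) :=
  Algebra.adjoin ℚ
    ({f | ∃ (i : Fin m) (j : Fin 2), f = yv m j - xv m i} ∪
      {yv m 1 - yv m 0, yv m 0 - yv m 1} ∪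
      {f | ∃ i j : Fin m, f = xv m j - xv m i})

/-- The automorphism τ exchanging y₁ and y₂ and fixing each xᵢ. -/
def tau (m : ℕ) : MvPolynomial (Fin m ⊕ Fin 2) ℚ ≃ₐ[ℚ] MvPolynomial (Fin m ⊕ Fin 2) ℚ :=
  renameEquiv ℚ (Equiv.sumCongr (Equiv.refl (Fin m)) (Equiv.swap 0 1))

/-! ### Auxiliary definitions: a linear change of coordinates -/

set_option maxHeartbeats 1000000

abbrev Rm (m : ℕ) := MvPolynomial (Fin m ⊕ Fin 2) ℚ

def phiF (m : ℕ) : Fin m ⊕ Fin 2 → Rm m :=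
  Sum.elim (fun i => X (Sum.inr 1) - X (Sum.inl i))
    (fun j => if j = 0 then X (Sum.inr 1) + X (Sum.inr 0) else X (Sum.inr 1) - X (Sum.inr 0))

def phiH (m : ℕ) : Rm m →ₐ[ℚ] Rm m := aeval (phiF m)

def psiF (m : ℕ) : Fin m ⊕ Fin 2 → Rm m :=
  Sum.elim (fun i => C (1/2 : ℚ) * (X (Sum.inr 0) + X (Sum.inr 1)) - X (Sum.inl i))
    (fun j => if j = 0 then C (1/2 : ℚ) * (X (Sum.inr 0) - X (Sum.inr 1))
      else C (1/2 : ℚ) * (X (Sum.inr 0) + X (Sum.inr 1)))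

def psiH (m : ℕ) : Rm m →ₐ[ℚ] Rm m := aeval (psiF m)

def dblF (m : ℕ) : Fin m ⊕ Fin 2 → Rm m :=
  fun v => if v = Sum.inr 0 then (X (Sum.inr 0)) ^ 2 else X v

def dblH (m : ℕ) : Rm m →ₐ[ℚ] Rm m := aeval (dblF m)

def negF (m : ℕ) : Fin m ⊕ Fin 2 → Rm m :=
  fun v => if v = Sum.inr 0 then - X (Sum.inr 0) else X v

def negH (m : ℕ) : Rm m →ₐ[ℚ] Rm m := aeval (negF m)

lemma half2 (m : ℕ) : (C (2⁻¹ : ℚ) : Rm m) * 2 = 1 := by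
  rw [mul_two, ← C_add]; norm_num

lemma half2' (m : ℕ) : (C (1/2 : ℚ) : Rm m) * 2 = 1 := by
  rw [one_div]; exact half2 m

lemma quarter4 (m : ℕ) : (C (1/4 : ℚ) : Rm m) * 4 = 1 := by
  have h4 : (4 : Rm m) = C (4 : ℚ) := (map_ofNat (C : ℚ →+* Rm m) 4).symm
  rw [h4, ← C_mul]; norm_num

lemma half_sq (m : ℕ) : (C (1/2 : ℚ) : Rm m) * C (1/2 : ℚ) = C (1/4 : ℚ) := by
  rw [← C_mul]; norm_num

lemma psi_phi (m : ℕ) : (psiH m).comp (phiH m) = AlgHom.id ℚ (Rm m) := by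
  apply algHom_ext
  rintro (i | j)
  · simp [phiH, psiH, phiF, psiF]
  · fin_cases j <;> simp [phiH, psiH, phiF, psiF, one_div] <;>
    first
      | linear_combination (X (Sum.inr 0) : Rm m) * half2 m
      | linear_combination ((X (Sum.inr 1) : Rm m) - X (Sum.inr 0)) * half2 m
      | linear_combination ((X (Sum.inr 0) : Rm m) - X (Sum.inr 1)) * half2 m
      | linear_combination (X (Sum.inr 1) : Rm m) * half2 m

lemma phi_psi (m : ℕ) : (phiH m).comp (psiH m) = AlgHom.id ℚ (Rm m) := by
  apply algHom_ext
  rintro (i | j)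
  · simp [phiH, psiH, phiF, psiF, one_div]
    linear_combination (X (Sum.inr 1) : Rm m) * half2 m
  · fin_cases j <;> simp [phiH, psiH, phiF, psiF, one_div] <;>
    first
      | linear_combination (X (Sum.inr 0) : Rm m) * half2 m
      | linear_combination ((X (Sum.inr 1) : Rm m) - X (Sum.inr 0)) * half2 m
      | linear_combination ((X (Sum.inr 0) : Rm m) - X (Sum.inr 1)) * half2 m
      | linear_combination (X (Sum.inr 1) : Rm m) * half2 m

lemma psi_inj (m : ℕ) : Function.Injective (psiH m) := by
  have h : Function.LeftInverse (phiH m) (psiH m) := fun a => by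
    have := DFunLike.congr_fun (phi_psi m) a
    simpa using this
  exact h.injective

/-! ### Monomial computations for `dblH` and `negH` -/

def Dd (m : ℕ) : (Fin m ⊕ Fin 2 →₀ ℕ) → (Fin m ⊕ Fin 2 →₀ ℕ) :=
  fun d => d + Finsupp.single (Sum.inr 0) (d (Sum.inr 0))

lemma Dd_apply (m : ℕ) (d : Fin m ⊕ Fin 2 →₀ ℕ) (v : Fin m ⊕ Fin 2) :
    Dd m d v = d v + if v = Sum.inr 0 then d (Sum.inr 0) else 0 := by
  simp [Dd, Finsupp.single_apply, eq_comm]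

lemma Dd_inj (m : ℕ) : Function.Injective (Dd m) := by
  intro a b h
  ext v
  have hv := DFunLike.congr_fun h v
  rw [Dd_apply, Dd_apply] at hv
  by_cases h0 : v = Sum.inr 0
  · subst h0; simp at hv; omega
  · simpa [h0] using hv

lemma dblH_monomial (m : ℕ) (d : Fin m ⊕ Fin 2 →₀ ℕ) (c : ℚ) :
    dblH m (monomial d c) = monomial (Dd m d) c := by
  rw [dblH, aeval_monomial, monomial_eq]
  have hsupp : (Dd m d).support = d.support := by
    ext v
    simp only [Finsupp.mem_support_iff, Dd_apply]
    split_ifs with h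
    · subst h; omega
    · omega
  have halg : (algebraMap ℚ (Rm m)) c = C c := rfl
  rw [halg, Finsupp.prod, Finsupp.prod, hsupp]
  congr 1
  apply Finset.prod_congr rfl
  intro v hv
  by_cases h : v = Sum.inr 0
  · subst h
    rw [Dd_apply]
    simp only [dblF, reduceIte]
    rw [show d (Sum.inr 0) + d (Sum.inr 0) = 2 * d (Sum.inr 0) by omega, pow_mul]
  · simp [dblF, h, Dd_apply]

lemma negH_monomial (m : ℕ) (d : Fin m ⊕ Fin 2 →₀ ℕ) (c : ℚ) :
    negH m (monomial d c) = monomial d ((-1) ^ (d (Sum.inr 0)) * c) := by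
  rw [negH, aeval_monomial, monomial_eq]
  have halg : (algebraMap ℚ (Rm m)) c = C c := rfl
  have hC : (C ((-1 : ℚ) ^ (d (Sum.inr 0)) * c) : Rm m)
      = (-1 : Rm m) ^ (d (Sum.inr 0)) * C c := by
    rw [C_mul, map_pow, map_neg, map_one]
  rw [halg, hC, Finsupp.prod, Finsupp.prod]
  have step : ∀ v ∈ d.support,
      negF m v ^ d v
        = (if v = Sum.inr 0 then (-1 : Rm m) ^ d v else 1) * X v ^ d v := by
    intro v _
    by_cases h : v = Sum.inr 0
    · subst h
      simp only [negF, reduceIte]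
      rw [show (-X (Sum.inr 0) : Rm m) = (-1) * X (Sum.inr 0) by ring, mul_pow]
    · simp [negF, h]
  rw [Finset.prod_congr rfl step, Finset.prod_mul_distrib]
  have h1 : (∏ v ∈ d.support, (if v = Sum.inr 0 then (-1 : Rm m) ^ d v else 1))
      = (-1 : Rm m) ^ (d (Sum.inr 0)) := by
    rw [Finset.prod_ite_eq' d.support (Sum.inr 0) (fun v => (-1 : Rm m) ^ d v)]
    by_cases h : (Sum.inr 0 : Fin m ⊕ Fin 2) ∈ d.support
    · rw [if_pos h]
    · rw [if_neg h, Finsupp.notMem_support_iff.1 h, pow_zero]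
  rw [h1]; ring

lemma coeff_negH (m : ℕ) (g : Rm m) (d : Fin m ⊕ Fin 2 →₀ ℕ) :
    coeff d (negH m g) = (-1) ^ (d (Sum.inr 0)) * coeff d g := by
  conv_lhs => rw [g.as_sum, map_sum]
  simp only [negH_monomial]
  rw [coeff_sum]
  simp only [coeff_monomial]
  rw [Finset.sum_ite_eq' g.support d (fun e => (-1 : ℚ) ^ (e (Sum.inr 0)) * coeff e g)]
  by_cases h : d ∈ g.support
  · rw [if_pos h]
  · rw [if_neg h, MvPolynomial.notMem_support_iff.1 h, mul_zero]

lemma coeff_dblH (m : ℕ) (g : Rm m) (d : Fin m ⊕ Fin 2 →₀ ℕ) :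
    coeff (Dd m d) (dblH m g) = coeff d g := by
  conv_lhs => rw [g.as_sum, map_sum]
  simp only [dblH_monomial]
  rw [coeff_sum]
  simp only [coeff_monomial, (Dd_inj m).eq_iff]
  rw [Finset.sum_ite_eq' g.support d (fun e => coeff e g)]
  by_cases h : d ∈ g.support
  · rw [if_pos h]
  · rw [if_neg h, MvPolynomial.notMem_support_iff.1 h]

lemma dbl_inj (m : ℕ) : Function.Injective (dblH m) := by
  intro p q h
  ext d
  rw [← coeff_dblH m p d, ← coeff_dblH m q d, h]

/-! ### The conjugated involution and τ-invariance -/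

lemma swap_inl (m : ℕ) (i : Fin m) :
    (Equiv.swap (Sum.inr 0 : Fin m ⊕ Fin 2) (Sum.inr 1)) (Sum.inl i) = Sum.inl i :=
  Equiv.swap_apply_of_ne_of_ne (by simp) (by simp)

lemma swap_inr0 (m : ℕ) :
    (Equiv.swap (Sum.inr 0 : Fin m ⊕ Fin 2) (Sum.inr 1)) (Sum.inr 0) = Sum.inr 1 :=
  Equiv.swap_apply_left _ _

lemma swap_inr1 (m : ℕ) :
    (Equiv.swap (Sum.inr 0 : Fin m ⊕ Fin 2) (Sum.inr 1)) (Sum.inr 1) = Sum.inr 0 :=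
  Equiv.swap_apply_right _ _

lemma neg_phi (m : ℕ) :
    (negH m).comp (phiH m) = (phiH m).comp (tau m).toAlgHom := by
  apply algHom_ext
  rintro (i | j)
  · simp [phiH, negH, phiF, negF, tau, swap_inl, swap_inr0, swap_inr1]
  · fin_cases j <;> simp [phiH, negH, phiF, negF, tau, swap_inl, swap_inr0, swap_inr1] <;> ring

lemma tau_Xg (m : ℕ) (i : Fin m) : tau m (Xg m i) = Xg m i := by
  simp [tau, Xg, xv, yv, swap_inl, swap_inr0, swap_inr1]
  ring

lemma tau_Yg (m : ℕ) : tau m (Yg m) = Yg m := by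
  simp [tau, Yg, yv, swap_inl, swap_inr0, swap_inr1]
  ring

/-! ### Membership lemmas -/

lemma memA (m : ℕ) {g : Rm m} (h1 : ∀ d ∈ g.support, d (Sum.inr 1) = 0)
    (h2 : ∀ d ∈ g.support, Even (d (Sum.inr 0))) :
    g ∈ Algebra.adjoin ℚ
      ((Set.range fun i : Fin m => (X (Sum.inl i) : Rm m)) ∪ {(X (Sum.inr 0) : Rm m) ^ 2}) := by
  have hg : g = ∑ d ∈ g.support, monomial d (coeff d g) := g.as_sum
  rw [hg]
  apply Subalgebra.sum_mem
  intro d hd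
  rw [monomial_eq]
  apply mul_mem
  · exact Subalgebra.algebraMap_mem _ (coeff d g)
  · rw [Finsupp.prod]
    apply Subalgebra.prod_mem
    intro v hv
    rcases v with i | j
    · have h1' : (X (Sum.inl i) : Rm m) ∈
          ((Set.range fun i : Fin m => (X (Sum.inl i) : Rm m)) ∪ {(X (Sum.inr 0) : Rm m) ^ 2}) :=
        Set.mem_union_left _ (Set.mem_range_self i)
      exact pow_mem (Algebra.subset_adjoin (R := ℚ) h1') _
    · have hj : j = 0 ∨ j = 1 := by omega
      rcases hj with rfl | rfl
      · obtain ⟨k, hk⟩ := h2 d hd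
        rw [hk, ← two_mul, pow_mul]
        have h1' : ((X (Sum.inr 0) : Rm m) ^ 2) ∈
            ((Set.range fun i : Fin m => (X (Sum.inl i) : Rm m)) ∪ {(X (Sum.inr 0) : Rm m) ^ 2}) :=
          Set.mem_union_right _ (Set.mem_singleton _)
        exact pow_mem (Algebra.subset_adjoin (R := ℚ) h1') _
      · exact absurd (h1 d hd) (Finsupp.mem_support_iff.1 hv)

lemma phi_supported (m : ℕ) {f : Rm m} (hf : f ∈ Ssub m) :
    phiH m f ∈ supported ℚ {v : Fin m ⊕ Fin 2 | v ≠ Sum.inr 1} := by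
  have hle : Subalgebra.map (phiH m) (Ssub m)
      ≤ supported ℚ {v : Fin m ⊕ Fin 2 | v ≠ Sum.inr 1} := by
    rw [Ssub, AlgHom.map_adjoin]
    apply Algebra.adjoin_le
    rintro _ ⟨p, hp, rfl⟩
    have hX0 : (X (Sum.inr 0) : Rm m) ∈ supported ℚ {v : Fin m ⊕ Fin 2 | v ≠ Sum.inr 1} :=
      X_mem_supported.2 (by simp)
    have hXl : ∀ i : Fin m, (X (Sum.inl i) : Rm m) ∈
        supported ℚ {v : Fin m ⊕ Fin 2 | v ≠ Sum.inr 1} :=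
      fun i => X_mem_supported.2 (by simp)
    rcases hp with (⟨i, j, rfl⟩ | hp) | ⟨i, j, rfl⟩
    · have hj : j = 0 ∨ j = 1 := by omega
      rcases hj with rfl | rfl
      · have he : phiH m (yv m 0 - xv m i) = X (Sum.inl i) + X (Sum.inr 0) := by
          simp [phiH, phiF, xv, yv]; ring
        rw [he]; exact add_mem (hXl i) hX0
      · have he : phiH m (yv m 1 - xv m i) = X (Sum.inl i) - X (Sum.inr 0) := by
          simp [phiH, phiF, xv, yv]
        rw [he]; exact sub_mem (hXl i) hX0
    · rcases hp with rfl | rfl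
      · have he : phiH m (yv m 1 - yv m 0) = - X (Sum.inr 0) - X (Sum.inr 0) := by
          simp [phiH, phiF, yv]; ring
        rw [he]; exact sub_mem (neg_mem hX0) hX0
      · have he : phiH m (yv m 0 - yv m 1) = X (Sum.inr 0) + X (Sum.inr 0) := by
          simp [phiH, phiF, yv]
        rw [he]; exact add_mem hX0 hX0
    · have he : phiH m (xv m j - xv m i) = X (Sum.inl i) - X (Sum.inl j) := by
        simp [phiH, phiF, xv]
      rw [he]; exact sub_mem (hXl i) (hXl j)
  exact hle ⟨f, hf, rfl⟩

lemma phi_vars (m : ℕ) {f : Rm m} (hf : f ∈ Ssub m) :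
    ∀ d ∈ (phiH m f).support, d (Sum.inr 1) = 0 := by
  intro d hd
  by_contra h0
  have hv : Sum.inr 1 ∈ (phiH m f).vars :=
    (mem_vars _).2 ⟨d, hd, Finsupp.mem_support_iff.2 h0⟩
  exact (mem_supported.1 (phi_supported m hf) hv) rfl

lemma even_of_neg_fixed (m : ℕ) {g : Rm m} (h : negH m g = g) :
    ∀ d ∈ g.support, Even (d (Sum.inr 0)) := by
  intro d hd
  by_contra hodd
  have h1 := coeff_negH m g d
  rw [h] at h1
  rw [Nat.not_even_iff_odd] at hodd
  rw [hodd.neg_one_pow] at h1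
  have hz : coeff d g = 0 := by linarith
  exact MvPolynomial.mem_support_iff.1 hd hz

/-! ### Images of the generators under ψ -/

lemma psi_X_inl (m : ℕ) (i : Fin m) : psiH m (X (Sum.inl i)) = Xg m i := by
  simp [psiH, psiF, Xg, xv, yv]

lemma psi_X0sq (m : ℕ) : psiH m ((X (Sum.inr 0) : Rm m) ^ 2) = Yg m := by
  rw [map_pow]
  have h0 : psiH m (X (Sum.inr 0)) = C (1/2 : ℚ) * (X (Sum.inr 0) - X (Sum.inr 1)) := by
    simp [psiH, psiF]
  rw [h0, Yg]
  simp only [yv]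
  linear_combination ((X (Sum.inr 0) - X (Sum.inr 1) : Rm m) ^ 2) * half_sq m
    + (- ((X (Sum.inr 0) : Rm m) * X (Sum.inr 1))) * quarter4 m

/-! ### Generators lie in S -/

lemma Xg_mem_Ssub (m : ℕ) (i : Fin m) : Xg m i ∈ Ssub m := by
  have hx : Xg m i = C (1/2 : ℚ) * ((yv m 0 - xv m i) + (yv m 1 - xv m i)) := by
    rw [Xg]; linear_combination (xv m i) * half2' m
  rw [hx]
  have h1 : yv m 0 - xv m i ∈
      ({f | ∃ (i : Fin m) (j : Fin 2), f = yv m j - xv m i} ∪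
        {yv m 1 - yv m 0, yv m 0 - yv m 1} ∪
        {f | ∃ i j : Fin m, f = xv m j - xv m i}) :=
    Set.mem_union_left _ (Set.mem_union_left _ ⟨i, 0, rfl⟩)
  have h2 : yv m 1 - xv m i ∈
      ({f | ∃ (i : Fin m) (j : Fin 2), f = yv m j - xv m i} ∪
        {yv m 1 - yv m 0, yv m 0 - yv m 1} ∪
        {f | ∃ i j : Fin m, f = xv m j - xv m i}) :=
    Set.mem_union_left _ (Set.mem_union_left _ ⟨i, 1, rfl⟩)
  exact mul_mem (Subalgebra.algebraMap_mem _ (1/2 : ℚ))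
    (add_mem (Algebra.subset_adjoin h1) (Algebra.subset_adjoin h2))

lemma Yg_mem_Ssub (m : ℕ) : Yg m ∈ Ssub m := by
  have hy : Yg m = C (1/4 : ℚ) * ((yv m 0 - yv m 1) * (yv m 0 - yv m 1)) := by
    rw [Yg]; linear_combination (yv m 0 * yv m 1) * quarter4 m
  rw [hy]
  have h1 : yv m 0 - yv m 1 ∈
      ({f | ∃ (i : Fin m) (j : Fin 2), f = yv m j - xv m i} ∪
        {yv m 1 - yv m 0, yv m 0 - yv m 1} ∪
        {f | ∃ i j : Fin m, f = xv m j - xv m i}) :=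
    Set.mem_union_left _ (Set.mem_union_right _ (Set.mem_insert_iff.2 (Or.inr rfl)))
  exact mul_mem (Subalgebra.algebraMap_mem _ (1/4 : ℚ))
    (mul_mem (Algebra.subset_adjoin h1) (Algebra.subset_adjoin h1))

/-! ### Part 2 helpers -/

def emb (m : ℕ) : Option (Fin m) → Fin m ⊕ Fin 2 := fun o => o.elim (Sum.inr 0) Sum.inl

lemma emb_inj (m : ℕ) : Function.Injective (emb m) := by
  intro a b h
  cases a <;> cases b <;> simp [emb] at h ⊢ <;> exact h

/-! ### Main theorem -/

/-- Lemma 4.1: the τ-invariant subring of S is the ℚ-subalgebra generated by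
X₁,…,X_m and Y, and these generators are algebraically independent over ℚ. -/
theorem stmt5 (m : ℕ) (hm : 1 ≤ m) :
    (∀ f : MvPolynomial (Fin m ⊕ Fin 2) ℚ,
      (f ∈ Ssub m ∧ tau m f = f) ↔
        f ∈ Algebra.adjoin ℚ (Set.range (Xg m) ∪ {Yg m})) ∧
    AlgebraicIndependent ℚ (fun o : Option (Fin m) => o.elim (Yg m) (Xg m)) := by
  constructor
  · intro f
    constructor
    · rintro ⟨hfS, hft⟩
      have h1 := phi_vars m hfS
      have hneg : negH m (phiH m f) = phiH m f := by
        have hc := DFunLike.congr_fun (neg_phi m) f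
        simp only [AlgHom.coe_comp, Function.comp_apply, AlgEquiv.toAlgHom_eq_coe,
          AlgHom.coe_coe] at hc
        exact hc.trans (congrArg (phiH m) hft)
      have h2 := even_of_neg_fixed m hneg
      have hg := memA m h1 h2
      have hmap : psiH m (phiH m f) ∈ Subalgebra.map (psiH m)
          (Algebra.adjoin ℚ
            ((Set.range fun i : Fin m => (X (Sum.inl i) : Rm m))
              ∪ {(X (Sum.inr 0) : Rm m) ^ 2})) := ⟨_, hg, rfl⟩
      rw [AlgHom.map_adjoin] at hmap
      have hpf : psiH m (phiH m f) = f := by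
        simpa using DFunLike.congr_fun (psi_phi m) f
      rw [hpf] at hmap
      refine Algebra.adjoin_le ?_ hmap
      rintro _ ⟨p, hp, rfl⟩
      rcases hp with ⟨i, rfl⟩ | rfl
      · rw [psi_X_inl]
        exact Algebra.subset_adjoin (Set.mem_union_left _ (Set.mem_range_self i))
      · rw [psi_X0sq]
        exact Algebra.subset_adjoin (Set.mem_union_right _ (Set.mem_singleton _))
    · intro hf
      have hS : Algebra.adjoin ℚ (Set.range (Xg m) ∪ {Yg m}) ≤ Ssub m := by
        apply Algebra.adjoin_le
        rintro p (⟨i, rfl⟩ | rfl)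
        · exact Xg_mem_Ssub m i
        · exact Yg_mem_Ssub m
      have hT : Algebra.adjoin ℚ (Set.range (Xg m) ∪ {Yg m})
          ≤ AlgHom.equalizer (tau m).toAlgHom (AlgHom.id ℚ (Rm m)) := by
        apply Algebra.adjoin_le
        rintro p (⟨i, rfl⟩ | rfl)
        · exact tau_Xg m i
        · exact tau_Yg m
      exact ⟨hS hf, hT hf⟩
  · have base := MvPolynomial.algebraicIndependent_X (Fin m ⊕ Fin 2) ℚ
    have h1 := base.comp (emb m) (emb_inj m)
    have hinj : Function.Injective ((psiH m).comp (dblH m)) := by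
      intro a b h
      exact dbl_inj m (psi_inj m h)
    have h2 := h1.map' (f := (psiH m).comp (dblH m)) hinj
    have hfun : (⇑((psiH m).comp (dblH m))) ∘ ((X : (Fin m ⊕ Fin 2) → Rm m) ∘ emb m)
        = fun o : Option (Fin m) => o.elim (Yg m) (Xg m) := by
      funext o
      cases o with
      | none =>
        show psiH m (dblH m (X (Sum.inr 0))) = Yg m
        have hd : dblH m (X (Sum.inr 0) : Rm m) = X (Sum.inr 0) ^ 2 := by
          simp [dblH, dblF]
        rw [hd, psi_X0sq]
      | some i =>
        show psiH m (dblH m (X (Sum.inl i))) = Xg m i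
        have hd : dblH m (X (Sum.inl i) : Rm m) = X (Sum.inl i) := by
          simp [dblH, dblF]
        rw [hd, psi_X_inl]
    rw [← hfun]
    exact h2

end
end

section
/- Let m ≥ 3 and let A = (a_{ij}) be an invertible m×m matrix over ℚ satisfying: (a) ∑_{i=1}^m a_{ij₁}² = ∑_{i=1}^m a_{ij₂}² for all column indices j₁, j₂, and (b) a_{i₁j₁}·a_{i₂j₁} = a_{i₁j₂}·a_{i₂j₂} for all i₁ ≠ i₂ and all j₁, j₂. Then there exist a non-zero rational number d, a permutation σ of {1,…,m}, and signs ε_j ∈ {1,−1} such that a_{ij} = d·ε_j if i = σ(j) and a_{ij} = 0 otherwise. -/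
/-- The linear-algebra step in the proof of Proposition 5.1: an invertible matrix
A over ℚ with equal column sums of squares and with a_{i₁j₁}a_{i₂j₁} = a_{i₁j₂}a_{i₂j₂}
for i₁ ≠ i₂ is a dilation of a signed permutation matrix. -/
theorem stmt9 (m : ℕ) (hm : 3 ≤ m) (A : Matrix (Fin m) (Fin m) ℚ)
    (hA : IsUnit A.det)
    (ha : ∀ j₁ j₂ : Fin m, ∑ i, A i j₁ ^ 2 = ∑ i, A i j₂ ^ 2)
    (hb : ∀ i₁ i₂ j₁ j₂ : Fin m, i₁ ≠ i₂ → A i₁ j₁ * A i₂ j₁ = A i₁ j₂ * A i₂ j₂) :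
    ∃ (d : ℚ) (σ : Equiv.Perm (Fin m)) (ε : Fin m → ℚ), d ≠ 0 ∧
      (∀ j, ε j = 1 ∨ ε j = -1) ∧
      ∀ i j, A i j = if i = σ j then d * ε j else 0 := by
  have hdet : A.det ≠ 0 := hA.ne_zero
  -- each column has at most one nonzero entry
  have key : ∀ (j : Fin m) (i₁ i₂ : Fin m), i₁ ≠ i₂ → A i₁ j = 0 ∨ A i₂ j = 0 := by
    intro j i₁ i₂ hne
    by_contra hcon
    push_neg at hcon
    obtain ⟨h1, h2⟩ := hcon
    have hc : ∀ j', A i₁ j' * A i₂ j' = A i₁ j * A i₂ j := fun j' => hb i₁ i₂ j' j hne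
    have hcne : A i₁ j * A i₂ j ≠ 0 := mul_ne_zero h1 h2
    have hrow1 : ∀ j', A i₁ j' ≠ 0 := by
      intro j' h0
      apply hcne
      rw [← hc j', h0, zero_mul]
    -- pick a third row
    obtain ⟨i₃, hi₃⟩ : ∃ i₃, i₃ ∉ ({i₁, i₂} : Finset (Fin m)) := by
      by_contra h
      push_neg at h
      have h1 : (Finset.univ : Finset (Fin m)).card ≤ ({i₁, i₂} : Finset (Fin m)).card :=
        Finset.card_le_card (fun x _ => h x)
      have h2 : ({i₁, i₂} : Finset (Fin m)).card ≤ 2 :=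
        (Finset.card_insert_le _ _).trans (by simp)
      simp only [Finset.card_univ, Fintype.card_fin] at h1
      omega
    simp only [Finset.mem_insert, Finset.mem_singleton, not_or] at hi₃
    obtain ⟨hi₃1, hi₃2⟩ := hi₃
    by_cases h13 : A i₁ j * A i₃ j = 0
    · -- row i₃ is zero
      have hrow3 : ∀ j', A i₃ j' = 0 := by
        intro j'
        have := hb i₁ i₃ j' j (fun h => hi₃1 h.symm)
        rw [h13] at this
        exact (mul_eq_zero.mp this).resolve_left (hrow1 j')
      have hveq : Matrix.vecMul (Pi.single i₃ 1 : Fin m → ℚ) A = 0 := by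
        ext j'
        simp only [Matrix.vecMul, dotProduct, Pi.single_apply, ite_mul, one_mul,
          zero_mul, Pi.zero_apply]
        rw [Finset.sum_ite_eq']
        simp [hrow3 j']
      have := Matrix.eq_zero_of_vecMul_eq_zero hdet hveq
      simpa [Pi.single_apply] using congrFun this i₃
    · -- rows i₂ and i₃ proportional
      have hrow3 : ∀ j', A i₃ j' ≠ 0 := by
        intro j' h0
        apply h13
        rw [hb i₁ i₃ j j' (fun h => hi₃1 h.symm), h0, mul_zero]
      have hprop : ∀ j', A i₂ j' * (A i₁ j * A i₃ j) = A i₃ j' * (A i₁ j * A i₂ j) := by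
        intro j'
        have e1 : A i₁ j' * A i₂ j' = A i₁ j * A i₂ j := hb i₁ i₂ j' j hne
        have e2 : A i₁ j' * A i₃ j' = A i₁ j * A i₃ j := hb i₁ i₃ j' j (fun h => hi₃1 h.symm)
        have : A i₁ j' * (A i₂ j' * (A i₁ j * A i₃ j)) =
            A i₁ j' * (A i₃ j' * (A i₁ j * A i₂ j)) := by
          calc A i₁ j' * (A i₂ j' * (A i₁ j * A i₃ j))
              = (A i₁ j' * A i₂ j') * (A i₁ j * A i₃ j) := by ring
            _ = (A i₁ j * A i₂ j) * (A i₁ j' * A i₃ j') := by rw [e1, e2]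
            _ = A i₁ j' * (A i₃ j' * (A i₁ j * A i₂ j)) := by ring
        exact mul_left_cancel₀ (hrow1 j') this
      have hveq :
          Matrix.vecMul
            (Pi.single i₂ (A i₁ j * A i₃ j) - Pi.single i₃ (A i₁ j * A i₂ j) : Fin m → ℚ) A
            = 0 := by
        ext j'
        simp only [Matrix.vecMul, dotProduct, Pi.single_apply,
          ite_mul, zero_mul, Pi.sub_apply, Pi.zero_apply, sub_mul]
        rw [Finset.sum_sub_distrib, Finset.sum_ite_eq', Finset.sum_ite_eq']
        simp only [Finset.mem_univ, if_true]
        linear_combination hprop j'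
      have := Matrix.eq_zero_of_vecMul_eq_zero hdet hveq
      have h := congrFun this i₂
      simp only [Pi.sub_apply, Pi.single_apply, if_pos rfl,
        if_neg (show i₂ ≠ i₃ from fun h => hi₃2 h.symm), sub_zero, Pi.zero_apply] at h
      exact h13 h
  -- each column is nonzero
  have colnz : ∀ j : Fin m, ∃ i, A i j ≠ 0 := by
    intro j
    by_contra h0
    push_neg at h0
    have hveq : Matrix.mulVec A (Pi.single j 1 : Fin m → ℚ) = 0 := by
      ext i
      simp only [Matrix.mulVec, dotProduct, Pi.single_apply, mul_ite, mul_one,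
        mul_zero, Pi.zero_apply]
      rw [Finset.sum_ite_eq']
      simp [h0 i]
    have := Matrix.eq_zero_of_mulVec_eq_zero hdet hveq
    simpa [Pi.single_apply] using congrFun this j
  choose f hf using colnz
  have hzero : ∀ (i j : Fin m), i ≠ f j → A i j = 0 := by
    intro i j hij
    exact (key j i (f j) hij).resolve_right (hf j)
  have hfinj : Function.Injective f := by
    intro j₁ j₂ hj
    by_contra hne
    have hveq : Matrix.mulVec A (Pi.single j₁ (A (f j₁) j₂) - Pi.single j₂ (A (f j₁) j₁) : Fin m → ℚ)
        = 0 := by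
      ext i
      simp only [Matrix.mulVec, dotProduct, Pi.sub_apply, Pi.single_apply, mul_sub,
        mul_ite, mul_zero, Pi.zero_apply]
      rw [Finset.sum_sub_distrib, Finset.sum_ite_eq', Finset.sum_ite_eq']
      simp only [Finset.mem_univ, if_true]
      by_cases hi : i = f j₁
      · subst hi; ring
      · rw [hzero i j₁ hi, hzero i j₂ (by rw [← hj]; exact hi)]; ring
    have hv0 := Matrix.eq_zero_of_mulVec_eq_zero hdet hveq
    have h := congrFun hv0 j₁
    simp only [Pi.sub_apply, Pi.single_apply, if_pos rfl, if_neg hne, sub_zero,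
      Pi.zero_apply] at h
    exact hf j₂ (hj ▸ h)
  let σ : Equiv.Perm (Fin m) := Equiv.ofBijective f (Finite.injective_iff_bijective.mp hfinj)
  have hσ : ∀ j, σ j = f j := fun j => rfl
  have hsq : ∀ j₁ j₂ : Fin m, (A (f j₁) j₁) ^ 2 = (A (f j₂) j₂) ^ 2 := by
    intro j₁ j₂
    have h1 : ∑ i, A i j₁ ^ 2 = A (f j₁) j₁ ^ 2 := by
      apply Finset.sum_eq_single
      · intro i _ hi; rw [hzero i j₁ hi]; ring
      · simp
    have h2 : ∑ i, A i j₂ ^ 2 = A (f j₂) j₂ ^ 2 := by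
      apply Finset.sum_eq_single
      · intro i _ hi; rw [hzero i j₂ hi]; ring
      · simp
    rw [← h1, ← h2, ha j₁ j₂]
  have h0m : 0 < m := by omega
  set j₀ : Fin m := ⟨0, h0m⟩ with hj₀
  set d : ℚ := A (f j₀) j₀ with hd
  have hdne : d ≠ 0 := hf j₀
  refine ⟨d, σ, fun j => A (f j) j / d, hdne, ?_, ?_⟩
  · intro j
    have hsq' : (A (f j) j / d) ^ 2 = 1 := by
      rw [div_pow, hsq j j₀, ← hd, div_self (pow_ne_zero 2 hdne)]
    have hfac : (A (f j) j / d - 1) * (A (f j) j / d + 1) = 0 := by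
      linear_combination hsq'
    rcases mul_eq_zero.mp hfac with h | h
    · left; linarith
    · right; linarith
  · intro i j
    rw [hσ]
    by_cases hi : i = f j
    · subst hi
      rw [if_pos rfl, mul_div_cancel₀ _ hdne]
    · rw [if_neg hi]
      exact hzero i j hi
end

section
/- Let m > 2 and let 𝒜 = ℚ[X₁,…,X_m]/(Xᵢ² − Xⱼ² : 1 ≤ i,j ≤ m), with X̄ᵢ the class of Xᵢ. Let φ be a ℚ-algebra automorphism of 𝒜 such that φ(X̄ᵢ) lies in the ℚ-linear span of X̄₁,…,X̄_m for every i. Then there exist a non-zero rational number d, a permutation σ of {1,…,m}, and signs εᵢ ∈ {1,−1} such that φ(X̄ᵢ) = d·εᵢ·X̄_{σ(i)} for all i. -/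
open MvPolynomial

section Aux

variable {m : ℕ}

/-- The sign function: `sgn i v = ±1` according to the boolean `v i`. -/
noncomputable def sgn (i : Fin m) : (Fin m → Bool) → ℚ :=
  fun v => if v i then 1 else -1

lemma sum_sgn_top (b : Fin m → ℚ) :
    ∑ k, b k * sgn k (fun _ => true) = ∑ k, b k := by
  simp [sgn]

lemma sum_sgn_flip (b : Fin m → ℚ) (k : Fin m) :
    ∑ c, b c * sgn c (fun c => decide (c ≠ k)) = (∑ c, b c) - 2 * b k := by
  have h : ∀ c : Fin m, b c * sgn c (fun c => decide (c ≠ k))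
      = b c - (if c = k then 2 * b c else 0) := by
    intro c
    by_cases hc : c = k <;> simp [sgn, hc] <;> ring
  rw [Finset.sum_congr rfl fun c _ => h c, Finset.sum_sub_distrib,
    Finset.sum_ite_eq' Finset.univ k (fun c => 2 * b c)]
  simp

lemma sum_sgn_flip2 (b : Fin m → ℚ) (k l : Fin m) (hkl : k ≠ l) :
    ∑ c, b c * sgn c (fun c => decide (c ≠ k ∧ c ≠ l))
      = (∑ c, b c) - 2 * b k - 2 * b l := by
  have h : ∀ c : Fin m, b c * sgn c (fun c => decide (c ≠ k ∧ c ≠ l))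
      = b c - (if c = k then 2 * b c else 0) - (if c = l then 2 * b c else 0) := by
    intro c
    by_cases hc : c = k <;> by_cases hc' : c = l
    · exact absurd (hc ▸ hc') hkl
    · subst hc
      simp [sgn, hkl]
      ring
    · subst hc'
      simp [sgn, hc]
      ring
    · simp [sgn, hc, hc']
  rw [Finset.sum_congr rfl fun c _ => h c, Finset.sum_sub_distrib, Finset.sum_sub_distrib,
    Finset.sum_ite_eq' Finset.univ k (fun c => 2 * b c),
    Finset.sum_ite_eq' Finset.univ l (fun c => 2 * b c)]
  simp

end Aux

set_option maxHeartbeats 1000000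
set_option synthInstance.maxHeartbeats 100000

/-- Proposition 5.1: every ℚ-algebra automorphism of
𝒜 = ℚ[X₁,…,X_m]/(Xᵢ² − Xⱼ²) preserving the linear span of the classes X̄ᵢ is the
composition of a dilation, a permutation of the variables, and sign changes. -/
theorem stmt10 (m : ℕ) (hm : 2 < m)
    (I : Ideal (MvPolynomial (Fin m) ℚ))
    (hI : I = Ideal.span {f | ∃ i j : Fin m, f = MvPolynomial.X i ^ 2 - MvPolynomial.X j ^ 2})
    (φ : (MvPolynomial (Fin m) ℚ ⧸ I) ≃ₐ[ℚ] (MvPolynomial (Fin m) ℚ ⧸ I))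
    (hφ : ∀ i : Fin m, φ (Ideal.Quotient.mk I (MvPolynomial.X i)) ∈
      Submodule.span ℚ (Set.range fun j : Fin m => Ideal.Quotient.mk I (MvPolynomial.X j))) :
    ∃ (d : ℚ) (σ : Equiv.Perm (Fin m)) (ε : Fin m → ℚ), d ≠ 0 ∧
      (∀ i, ε i = 1 ∨ ε i = -1) ∧
      ∀ i, φ (Ideal.Quotient.mk I (MvPolynomial.X i)) =
        (d * ε i) • Ideal.Quotient.mk I (MvPolynomial.X (σ i)) := by
  classical
  -- the test algebra of functions (Fin m → Bool) → ℚ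
  set Ψ : MvPolynomial (Fin m) ℚ →ₐ[ℚ] ((Fin m → Bool) → ℚ) := MvPolynomial.aeval sgn with hΨ
  have hker : ∀ a ∈ I, Ψ a = 0 := by
    have hle : I ≤ RingHom.ker Ψ.toRingHom := by
      rw [hI, Ideal.span_le]
      rintro f ⟨i, j, rfl⟩
      rw [SetLike.mem_coe, RingHom.mem_ker]
      have h1 : ∀ n : Fin m, ∀ v, sgn n v ^ 2 = 1 := by
        intro n v; unfold sgn; split <;> norm_num
      funext v
      simp only [AlgHom.toRingHom_eq_coe, RingHom.coe_coe, hΨ, map_sub, map_pow, aeval_X,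
        Pi.sub_apply, Pi.pow_apply, Pi.zero_apply]
      rw [h1 i v, h1 j v, sub_self]
    exact fun x hx => hle hx
  set ψ : (MvPolynomial (Fin m) ℚ ⧸ I) →ₐ[ℚ] ((Fin m → Bool) → ℚ) :=
    Ideal.Quotient.liftₐ I Ψ hker with hψdef
  have hψX : ∀ j : Fin m, ψ (Ideal.Quotient.mk I (MvPolynomial.X j)) = sgn j := by
    intro j
    rw [hψdef]; show Ψ (MvPolynomial.X j) = sgn j
    exact aeval_X sgn j
  -- coefficients of φ(X̄ i)
  have hcoef : ∀ i : Fin m, ∃ c : Fin m → ℚ,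
      ∑ j, c j • Ideal.Quotient.mk I (MvPolynomial.X j)
        = φ (Ideal.Quotient.mk I (MvPolynomial.X i)) :=
    fun i => (Submodule.mem_span_range_iff_exists_fun ℚ).mp (hφ i)
  choose a ha using hcoef
  -- values of ψ(φ(X̄ i)) as functions
  have hf : ∀ (i : Fin m) (v : Fin m → Bool),
      ψ (φ (Ideal.Quotient.mk I (MvPolynomial.X i))) v = ∑ j, a i j * sgn j v := by
    intro i v
    rw [← ha i, map_sum]
    simp only [map_smul]
    rw [Finset.sum_apply]
    refine Finset.sum_congr rfl fun j _ => ?_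
    rw [Pi.smul_apply, hψX, smul_eq_mul]
  -- the quadratic relations
  have hsq : ∀ (i j : Fin m) (v : Fin m → Bool),
      (∑ k, a i k * sgn k v) ^ 2 = (∑ k, a j k * sgn k v) ^ 2 := by
    intro i j v
    have h1 : Ideal.Quotient.mk I (MvPolynomial.X i ^ 2)
        = Ideal.Quotient.mk I (MvPolynomial.X j ^ 2) :=
      Ideal.Quotient.eq.mpr (by rw [hI]; exact Ideal.subset_span ⟨i, j, rfl⟩)
    have h2 : (φ (Ideal.Quotient.mk I (MvPolynomial.X i))) ^ 2
        = (φ (Ideal.Quotient.mk I (MvPolynomial.X j))) ^ 2 := by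
      rw [← map_pow, ← map_pow, ← map_pow, ← map_pow]
      exact congrArg φ h1
    have h3 := congrFun (congrArg ψ h2) v
    rw [map_pow, map_pow, Pi.pow_apply, Pi.pow_apply, hf, hf] at h3
    exact h3
  -- linear independence of the classes X̄ j
  have hLI : ∀ c : Fin m → ℚ,
      (∑ j, c j • Ideal.Quotient.mk I (MvPolynomial.X j)) = 0 → ∀ j, c j = 0 := by
    intro c hc j
    have h0 : ∀ v, ∑ k, c k * sgn k v = 0 := by
      intro v
      have h := congrFun (congrArg ψ hc) v
      rw [map_sum] at h
      simp only [map_smul] at h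
      rw [Finset.sum_apply] at h
      simp only [Pi.smul_apply, smul_eq_mul, hψX, map_zero, Pi.zero_apply] at h
      exact h
    have h1 := h0 (fun _ => true)
    have h2 := h0 (fun c => decide (c ≠ j))
    rw [sum_sgn_top] at h1
    rw [sum_sgn_flip] at h2
    linarith
  -- the product relations
  have hP : ∀ i j k l : Fin m, k ≠ l → a i k * a i l = a j k * a j l := by
    intro i j k l hkl
    have e1 := hsq i j (fun _ => true)
    have e2 := hsq i j (fun c => decide (c ≠ k))
    have e3 := hsq i j (fun c => decide (c ≠ l))
    have e4 := hsq i j (fun c => decide (c ≠ k ∧ c ≠ l))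
    rw [sum_sgn_top, sum_sgn_top] at e1
    rw [sum_sgn_flip, sum_sgn_flip] at e2
    rw [sum_sgn_flip, sum_sgn_flip] at e3
    rw [sum_sgn_flip2 _ _ _ hkl, sum_sgn_flip2 _ _ _ hkl] at e4
    linear_combination (e1 - e2 - e3 + e4) / 8
  -- each row has at most one nonzero entry
  have honce : ∀ i k l : Fin m, k ≠ l → a i k ≠ 0 → a i l = 0 := by
    intro i k l hkl hk
    by_contra hl
    have hall : ∀ j, a j k ≠ 0 := by
      intro j hjk0
      have h := hP j i k l hkl
      rw [hjk0, zero_mul] at h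
      exact mul_ne_zero hk hl h.symm
    have hnli : ¬ LinearIndependent ℚ (fun j : Fin m => ((a j k, (a j k)⁻¹) : ℚ × ℚ)) := by
      intro h
      have hcard := h.fintype_card_le_finrank
      simp only [Fintype.card_fin] at hcard
      have : Module.finrank ℚ (ℚ × ℚ) = 2 := by simp
      omega
    rw [Fintype.not_linearIndependent_iff] at hnli
    obtain ⟨c, hc, i₁, hi₁⟩ := hnli
    have hc1 : ∑ j, c j * a j k = 0 := by
      have h := congrArg Prod.fst hc
      rw [Prod.fst_sum] at h
      simpa using h
    have hc2 : ∑ j, c j * (a j k)⁻¹ = 0 := by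
      have h := congrArg Prod.snd hc
      rw [Prod.snd_sum] at h
      simpa using h
    have key : ∀ n, ∑ j, c j * a j n = 0 := by
      intro n
      rcases eq_or_ne n k with rfl | hn
      · exact hc1
      · have hform : ∀ j, a j n = (a i k * a i n) * (a j k)⁻¹ := by
          intro j
          rw [hP i j k n (Ne.symm hn), mul_comm (a j k) (a j n), mul_assoc,
            mul_inv_cancel₀ (hall j), mul_one]
        calc ∑ j, c j * a j n = ∑ j, (a i k * a i n) * (c j * (a j k)⁻¹) := by
              refine Finset.sum_congr rfl fun j _ => ?_
              rw [hform j]; ring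
          _ = (a i k * a i n) * ∑ j, c j * (a j k)⁻¹ := by rw [Finset.mul_sum]
          _ = 0 := by rw [hc2, mul_zero]
    have hz : ∑ j, c j • φ (Ideal.Quotient.mk I (MvPolynomial.X j)) = 0 := by
      calc ∑ j, c j • φ (Ideal.Quotient.mk I (MvPolynomial.X j))
          = ∑ j, ∑ n, (c j * a j n) • Ideal.Quotient.mk I (MvPolynomial.X n) := by
            refine Finset.sum_congr rfl fun j _ => ?_
            rw [← ha j, Finset.smul_sum]
            exact Finset.sum_congr rfl fun n _ => (smul_smul (c j) (a j n) _)
        _ = ∑ n, ∑ j, (c j * a j n) • Ideal.Quotient.mk I (MvPolynomial.X n) :=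
            Finset.sum_comm
        _ = ∑ n, (∑ j, c j * a j n) • Ideal.Quotient.mk I (MvPolynomial.X n) := by
            refine Finset.sum_congr rfl fun n _ => ?_
            rw [Finset.sum_smul]
        _ = 0 := by
            refine Finset.sum_eq_zero fun n _ => ?_
            rw [key n, zero_smul]
    have hz' : ∑ j, c j • Ideal.Quotient.mk I (MvPolynomial.X j) = 0 := by
      apply φ.injective
      rw [map_sum, map_zero]
      simpa only [map_smul] using hz
    exact hi₁ (hLI c hz' i₁)
  -- each row has a nonzero entry
  have hrow : ∀ i, ∃ k, a i k ≠ 0 := by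
    intro i
    by_contra hcon
    push_neg at hcon
    have h0 : φ (Ideal.Quotient.mk I (MvPolynomial.X i)) = 0 := by
      rw [← ha i]
      refine Finset.sum_eq_zero fun j _ => ?_
      rw [hcon j, zero_smul]
    have h1 : Ideal.Quotient.mk I (MvPolynomial.X i) = 0 := by
      apply φ.injective
      rw [h0, map_zero]
    have h2 := hLI (Pi.single i 1) ?_ i
    · simp at h2
    · rw [Finset.sum_eq_single i (fun b _ hb => by rw [Pi.single_eq_of_ne hb, zero_smul])
        (fun hmem => absurd (Finset.mem_univ i) hmem)]
      rw [h1, smul_zero]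
  choose σ₀ hσ₀ using hrow
  have huniq : ∀ i k, k ≠ σ₀ i → a i k = 0 := fun i k hk =>
    honce i (σ₀ i) k (Ne.symm hk) (hσ₀ i)
  -- the single-term formula
  have hsingle : ∀ i, φ (Ideal.Quotient.mk I (MvPolynomial.X i))
      = a i (σ₀ i) • Ideal.Quotient.mk I (MvPolynomial.X (σ₀ i)) := by
    intro i
    rw [← ha i]
    exact Finset.sum_eq_single (σ₀ i)
      (fun b _ hb => by rw [huniq i b hb, zero_smul])
      (fun hmem => absurd (Finset.mem_univ (σ₀ i)) hmem)
  -- σ₀ is injective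
  have hinj : Function.Injective σ₀ := by
    intro i j hij
    by_contra hne
    have h0 : φ (a j (σ₀ j) • Ideal.Quotient.mk I (MvPolynomial.X i)
        - a i (σ₀ i) • Ideal.Quotient.mk I (MvPolynomial.X j)) = 0 := by
      rw [map_sub, map_smul, map_smul, hsingle i, hsingle j, hij,
        smul_smul, smul_smul, mul_comm, sub_self]
    have h1 : a j (σ₀ j) • Ideal.Quotient.mk I (MvPolynomial.X i)
        - a i (σ₀ i) • Ideal.Quotient.mk I (MvPolynomial.X j) = 0 := by
      apply φ.injective
      rw [h0, map_zero]
    set c : Fin m → ℚ := fun n => if n = i then a j (σ₀ j)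
      else if n = j then -(a i (σ₀ i)) else 0 with hcdef
    have hcsum : ∑ n, c n • Ideal.Quotient.mk I (MvPolynomial.X n) = 0 := by
      have hterm : ∀ n : Fin m, c n • Ideal.Quotient.mk I (MvPolynomial.X n)
          = (if n = i then a j (σ₀ j) • Ideal.Quotient.mk I (MvPolynomial.X n) else 0)
            + (if n = j then (-(a i (σ₀ i))) • Ideal.Quotient.mk I (MvPolynomial.X n) else 0) := by
        intro n
        simp only [hcdef]
        by_cases hni : n = i
        · have hnj : ¬ n = j := by rw [hni]; exact hne
          rw [if_pos hni, if_pos hni, if_neg hnj, add_zero]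
        · by_cases hnj : n = j
          · rw [if_neg hni, if_pos hnj, if_neg hni, if_pos hnj, zero_add]
          · rw [if_neg hni, if_neg hnj, if_neg hni, if_neg hnj, zero_smul, add_zero]
      rw [Finset.sum_congr rfl fun n _ => hterm n, Finset.sum_add_distrib,
        Finset.sum_ite_eq' Finset.univ i, Finset.sum_ite_eq' Finset.univ j]
      simp only [Finset.mem_univ, if_true, neg_smul]
      rw [← sub_eq_add_neg]
      exact h1
    have := hLI c hcsum i
    rw [hcdef] at this
    simp only [if_pos rfl] at this
    exact hσ₀ j this
  have hbij : Function.Bijective σ₀ := (Finite.injective_iff_bijective).mp hinj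
  set σ : Equiv.Perm (Fin m) := Equiv.ofBijective σ₀ hbij with hσdef
  set i₀ : Fin m := ⟨0, by omega⟩ with hi₀
  set d : ℚ := a i₀ (σ₀ i₀) with hd
  have hdne : d ≠ 0 := hσ₀ i₀
  -- all diagonal entries have the same square
  have hdsq : ∀ i, a i (σ₀ i) ^ 2 = d ^ 2 := by
    intro i
    have e1 := hsq i i₀ (fun _ => true)
    rw [sum_sgn_top, sum_sgn_top] at e1
    have hsum : ∀ j, ∑ k, a j k = a j (σ₀ j) :=
      fun j => Finset.sum_eq_single (σ₀ j)
        (fun b _ hb => huniq j b hb)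
        (fun hmem => absurd (Finset.mem_univ (σ₀ j)) hmem)
    rw [hsum i, hsum i₀] at e1
    exact e1
  refine ⟨d, σ, fun i => a i (σ₀ i) / d, hdne, ?_, ?_⟩
  · intro i
    have hsq1 : (a i (σ₀ i) / d) ^ 2 = 1 := by
      rw [div_pow, hdsq i, div_self (pow_ne_zero 2 hdne)]
    have hfac : (a i (σ₀ i) / d - 1) * (a i (σ₀ i) / d + 1) = 0 := by
      have : (a i (σ₀ i) / d) ^ 2 - 1 = 0 := by rw [hsq1]; ring
      linear_combination this
    rcases mul_eq_zero.mp hfac with h | h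
    · left; linarith [h]
    · right; linarith [h]
  · intro i
    have hσi : σ i = σ₀ i := rfl
    rw [hσi, hsingle i]
    congr 1
    field_simp
end

section
/- Let n ≥ 3, let P = ℚ[X₁,…,X_{2n}], and for I ⊆ {1,…,2n} with |I| = k set R_I = ∑_{ν=0}^{⌊(k−1)/2⌋} e_{k−1−2ν}(Xᵢ : i∈I)·X₁^{2ν} and S_I = ∑_{ν=0}^{⌊k/2⌋} e_{k−2ν}(Xᵢ : i∈I)·X₁^{2ν}. Let 𝔞⁰ be the ideal of P generated by all Xᵢ² − Xⱼ² together with all R_I, S_I with |I| = n+1; let 𝔞⁺ = 𝔞⁰ + (R_I, S_I : |I| = n, 1 ∈ I) and 𝔞⁻ = 𝔞⁰ + (R_I, S_I : |I| = n, 1 ∉ I), and set 𝒜⁺ = P/𝔞⁺, 𝒜⁻ = P/𝔞⁻. Then there is no ℚ-algebra isomorphism φ: 𝒜⁺ → 𝒜⁻ such that for every i the image φ(X̄ᵢ) of the class of Xᵢ lies in the ℚ-linear span of the classes X̄₁,…,X̄_{2n} in 𝒜⁻. -/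
open MvPolynomial Finset

noncomputable section

/-- e_j(Xᵢ : i ∈ I), the elementary symmetric polynomial in the variables indexed by I. -/
def esF {N : ℕ} (I : Finset (Fin N)) (j : ℕ) : MvPolynomial (Fin N) ℚ :=
  ∑ J ∈ powersetCard j I, ∏ i ∈ J, X i

/-- R_I = ∑_{ν=0}^{⌊(|I|−1)/2⌋} e_{|I|−1−2ν}(Xᵢ : i∈I)·z^{2ν} (with z = X₁). -/
def RI {N : ℕ} (z : MvPolynomial (Fin N) ℚ) (I : Finset (Fin N)) : MvPolynomial (Fin N) ℚ :=
  ∑ ν ∈ range ((I.card - 1) / 2 + 1), esF I (I.card - 1 - 2 * ν) * z ^ (2 * ν)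

/-- S_I = ∑_{ν=0}^{⌊|I|/2⌋} e_{|I|−2ν}(Xᵢ : i∈I)·z^{2ν} (with z = X₁). -/
def SI {N : ℕ} (z : MvPolynomial (Fin N) ℚ) (I : Finset (Fin N)) : MvPolynomial (Fin N) ℚ :=
  ∑ ν ∈ range (I.card / 2 + 1), esF I (I.card - 2 * ν) * z ^ (2 * ν)

namespace Aux

lemma esF_hom {N : ℕ} (I : Finset (Fin N)) (j : ℕ) : (esF I j).IsHomogeneous j := by
  apply MvPolynomial.IsHomogeneous.sum
  intro J hJ
  have hJc : J.card = j := (Finset.mem_powersetCard.mp hJ).2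
  have := MvPolynomial.IsHomogeneous.prod J (fun i => (X i : MvPolynomial (Fin N) ℚ))
    (fun _ => 1) (fun i _ => isHomogeneous_X _ i)
  simpa [Finset.sum_const, hJc] using this

lemma RI_hom {N : ℕ} (i₀ : Fin N) (I : Finset (Fin N)) :
    (RI (X i₀) I).IsHomogeneous (I.card - 1) := by
  apply MvPolynomial.IsHomogeneous.sum
  intro ν hν
  have hν' : 2 * ν ≤ I.card - 1 := by
    have := Finset.mem_range.mp hν; omega
  have h : (I.card - 1 - 2 * ν) + 2 * ν = I.card - 1 := by omega
  have := (esF_hom I (I.card - 1 - 2*ν)).mul (isHomogeneous_X_pow i₀ (2*ν))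
  rwa [h] at this

lemma SI_hom {N : ℕ} (i₀ : Fin N) (I : Finset (Fin N)) :
    (SI (X i₀) I).IsHomogeneous I.card := by
  apply MvPolynomial.IsHomogeneous.sum
  intro ν hν
  have hν' : 2 * ν ≤ I.card := by
    have := Finset.mem_range.mp hν; omega
  have h : (I.card - 2 * ν) + 2 * ν = I.card := by omega
  have := (esF_hom I (I.card - 2*ν)).mul (isHomogeneous_X_pow i₀ (2*ν))
  rwa [h] at this

/-- Vanishing lemma: components of degree ≤ D of ideal members vanish at ε provided all
generators of degree ≤ D vanish at ε. -/
lemma vanish {N : ℕ} {S : Set (MvPolynomial (Fin N) ℚ)} {ε : Fin N → ℚ} {D : ℕ}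
    (hS : ∀ g ∈ S, ∃ e, g.IsHomogeneous e ∧ (e ≤ D → eval ε g = 0)) :
    ∀ p ∈ Ideal.span S, ∀ d ≤ D, eval ε (homogeneousComponent d p) = 0 := by
  intro p hp
  have key : ∀ q, ∀ d ≤ D, eval ε (homogeneousComponent d (q * p)) = 0 := by
    refine Submodule.span_induction
      (p := fun x _ => ∀ q, ∀ d ≤ D, eval ε (homogeneousComponent d (q * x)) = 0)
      ?_ ?_ ?_ ?_ hp
    · intro x hx q d hd
      obtain ⟨e, hxe, hx0⟩ := hS x hx
      rw [show q * x = (∑ k ∈ range (q.totalDegree + 1), homogeneousComponent k q) * x by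
            rw [sum_homogeneousComponent],
          Finset.sum_mul, map_sum, map_sum]
      apply Finset.sum_eq_zero
      intro k _
      have hk : ((homogeneousComponent k q) * x).IsHomogeneous (k + e) :=
        (homogeneousComponent_isHomogeneous k q).mul hxe
      rw [homogeneousComponent_of_mem ((mem_homogeneousSubmodule _ _).mpr hk)]
      by_cases hde : d = k + e
      · rw [if_pos hde, map_mul, hx0 (by omega), mul_zero]
      · rw [if_neg hde, map_zero]
    · intro q d hd; simp
    · intro x y _ _ ihx ihy q d hd
      rw [mul_add, map_add, map_add, ihx q d hd, ihy q d hd, add_zero]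
    · intro a x _ ih q d hd
      rw [smul_eq_mul, show q * (a * x) = (q * a) * x by ring]
      exact ih (q * a) d hd
  intro d hd
  simpa using key 1 d hd

lemma mem_hom_eval_zero {N : ℕ} {S : Set (MvPolynomial (Fin N) ℚ)} {ε : Fin N → ℚ} {D : ℕ}
    (hS : ∀ g ∈ S, ∃ e, g.IsHomogeneous e ∧ (e ≤ D → eval ε g = 0))
    {p : MvPolynomial (Fin N) ℚ} (hp : p ∈ Ideal.span S) {d : ℕ}
    (hpd : p.IsHomogeneous d) (hdD : d ≤ D) : eval ε p = 0 := by
  have h := vanish hS p hp d hdD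
  rwa [homogeneousComponent_of_mem ((mem_homogeneousSubmodule _ _).mpr hpd),
    if_pos rfl] at h

end Aux


namespace Aux

lemma eval_esF {N : ℕ} (v : Fin N → ℚ) (I : Finset (Fin N)) (j : ℕ) :
    eval v (esF I j) = ∑ J ∈ powersetCard j I, ∏ i ∈ J, v i := by
  simp [esF]

lemma eval_RI {N : ℕ} (v : Fin N → ℚ) (i₀ : Fin N) (I : Finset (Fin N)) :
    eval v (RI (X i₀) I) = ∑ ν ∈ range ((I.card - 1) / 2 + 1),
      (∑ J ∈ powersetCard (I.card - 1 - 2 * ν) I, ∏ i ∈ J, v i) * (v i₀) ^ (2 * ν) := by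
  simp [RI, eval_esF]

/-- the key evaluation: R_I vanishes at a ±1-vector whose I-coordinates contain both signs. -/
lemma evalRI_zero {N : ℕ} (ε : Fin N → ℚ) (i₀ : Fin N) (hε0 : ε i₀ = 1)
    (I : Finset (Fin N))
    (hplus : ∃ i ∈ I, ε i = 1) (hminus : ∃ i ∈ I, ε i = -1) :
    eval ε (RI (X i₀) I) = 0 := by
  classical
  set c := I.card with hc
  set Ej : ℕ → ℚ := fun j => ∑ J ∈ powersetCard j I, ∏ i ∈ J, ε i with hEj
  have hc1 : 1 ≤ c := by
    obtain ⟨i, hi, _⟩ := hplus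
    exact Finset.card_pos.mpr ⟨i, hi⟩
  -- eval RI as a sum of Ej's
  have heval : eval ε (RI (X i₀) I) = ∑ ν ∈ range ((c - 1) / 2 + 1), Ej (c - 1 - 2 * ν) := by
    rw [eval_RI]
    apply Finset.sum_congr rfl
    intro ν _
    rw [hε0, one_pow, mul_one]
  -- A : sum of all Ej equals ∏ (ε i + 1) = 0
  have hA : ∑ j ∈ range (c + 1), Ej j = 0 := by
    have h1 : ∑ j ∈ range (c + 1), Ej j = ∑ J ∈ I.powerset, ∏ i ∈ J, ε i := by
      rw [Finset.sum_powerset]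
    have h2 : ∏ i ∈ I, (ε i + 1) = ∑ J ∈ I.powerset, ∏ i ∈ J, ε i := by
      rw [Finset.prod_add]
      apply Finset.sum_congr rfl
      intro J _
      simp
    obtain ⟨i, hi, hie⟩ := hminus
    have h3 : ∏ i ∈ I, (ε i + 1) = 0 :=
      Finset.prod_eq_zero hi (by rw [hie]; ring)
    rw [h1, ← h2, h3]
  -- B : alternating sum equals ∏ (ε i − 1) = 0
  have hB : ∑ j ∈ range (c + 1), (-1 : ℚ) ^ (c - j) * Ej j = 0 := by
    have h1 : ∑ j ∈ range (c + 1), (-1 : ℚ) ^ (c - j) * Ej j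
        = ∑ J ∈ I.powerset, (∏ i ∈ J, ε i) * (-1 : ℚ) ^ (c - J.card) := by
      rw [Finset.sum_powerset]
      apply Finset.sum_congr rfl
      intro j hj
      rw [mul_comm]
      simp only [hEj]
      rw [Finset.sum_mul]
      apply Finset.sum_congr rfl
      intro J hJ
      rw [(Finset.mem_powersetCard.mp hJ).2]
    have h2 : ∏ i ∈ I, (ε i - 1) = ∑ J ∈ I.powerset, (∏ i ∈ J, ε i) * (-1 : ℚ) ^ (c - J.card) := by
      have := Finset.prod_add ε (fun _ => (-1 : ℚ)) I
      rw [show (∏ i ∈ I, (ε i - 1)) = ∏ i ∈ I, (ε i + (-1)) by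
            apply Finset.prod_congr rfl; intros; ring, this]
      apply Finset.sum_congr rfl
      intro J hJ
      rw [Finset.prod_const, Finset.card_sdiff_of_subset (Finset.mem_powerset.mp hJ)]
    obtain ⟨i, hi, hie⟩ := hplus
    have h3 : ∏ i ∈ I, (ε i - 1) = 0 :=
      Finset.prod_eq_zero hi (by rw [hie]; ring)
    rw [h1, ← h2, h3]
  -- split A and B by parity of c - j
  set O := (range (c + 1)).filter (fun j => (c - j) % 2 = 1) with hO
  have hAsplit : ∑ j ∈ O, Ej j + ∑ j ∈ (range (c+1)).filter (fun j => ¬ ((c - j) % 2 = 1)), Ej j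
      = 0 := by rw [Finset.sum_filter_add_sum_filter_not]; exact hA
  have hBsplit : (- ∑ j ∈ O, Ej j) + ∑ j ∈ (range (c+1)).filter (fun j => ¬ ((c - j) % 2 = 1)), Ej j = 0 := by
    rw [← Finset.sum_filter_add_sum_filter_not (range (c+1)) (fun j => (c - j) % 2 = 1)] at hB
    rw [← hB]
    congr 1
    · rw [← Finset.sum_neg_distrib]
      apply Finset.sum_congr rfl
      intro j hj
      have hodd : (c - j) % 2 = 1 := (Finset.mem_filter.mp hj).2
      rw [Odd.neg_one_pow (Nat.odd_iff.mpr hodd)]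
      ring
    · apply Finset.sum_congr rfl
      intro j hj
      have heven : ¬ ((c - j) % 2 = 1) := (Finset.mem_filter.mp hj).2
      rw [Even.neg_one_pow (Nat.even_iff.mpr (by omega))]
      ring
  have hOzero : ∑ j ∈ O, Ej j = 0 := by linarith
  -- reindex : eval RI = ∑_{j ∈ O} Ej j
  have hre : ∑ ν ∈ range ((c - 1) / 2 + 1), Ej (c - 1 - 2 * ν) = ∑ j ∈ O, Ej j := by
    apply Finset.sum_nbij' (i := fun ν => c - 1 - 2 * ν) (j := fun j => (c - 1 - j) / 2)
    · intro ν hν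
      have := Finset.mem_range.mp hν
      rw [hO, Finset.mem_filter, Finset.mem_range]
      omega
    · intro j hj
      rw [hO, Finset.mem_filter, Finset.mem_range] at hj
      rw [Finset.mem_range]
      omega
    · intro ν hν
      have := Finset.mem_range.mp hν
      omega
    · intro j hj
      rw [hO, Finset.mem_filter, Finset.mem_range] at hj
      omega
    · intro ν hν
      rfl
  rw [heval, hre, hOzero]

end Aux


namespace Aux

/-- Rigidity: a vector with all squares equal killing all R_I (|I| = n, z ∉ I) is zero. -/
lemma signs {n : ℕ} (hn : 3 ≤ n) (z o : Fin (2 * n))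
    (v : Fin (2 * n) → ℚ)
    (hsq : ∀ i j, v i ^ 2 = v j ^ 2)
    (hR : ∀ I : Finset (Fin (2 * n)), I.card = n → z ∉ I → eval v (RI (X z) I) = 0) :
    v = 0 := by
  classical
  set T := (Finset.univ : Finset (Fin (2*n))).erase z with hT
  have hTcard : T.card = 2 * n - 1 := by
    rw [hT, Finset.card_erase_of_mem (Finset.mem_univ z), Finset.card_univ, Fintype.card_fin]
  set A := T.filter (fun j => v j = v o) with hA
  set B := T.filter (fun j => v j = - v o) with hB
  have hcover : T ⊆ A ∪ B := by
    intro j hj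
    have h := hsq j o
    have h2 : (v j - v o) * (v j + v o) = 0 := by ring_nf; linear_combination h
    rcases mul_eq_zero.mp h2 with h3 | h3
    · exact Finset.mem_union_left _ (Finset.mem_filter.mpr ⟨hj, by linarith⟩)
    · exact Finset.mem_union_right _ (Finset.mem_filter.mpr ⟨hj, by linarith⟩)
  have hcards : 2 * n - 1 ≤ A.card + B.card := by
    calc 2 * n - 1 = T.card := hTcard.symm
    _ ≤ (A ∪ B).card := Finset.card_le_card hcover
    _ ≤ A.card + B.card := Finset.card_union_le _ _
  -- get a subset I of size n on which v is constant
  have hmain : ∀ (w : ℚ) (I : Finset (Fin (2*n))), I.card = n → z ∉ I →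
      (∀ i ∈ I, v i = w) → v z ^ 2 = w ^ 2 → w = 0 := by
    intro w I hIcard hzI hIw hvz
    have h0 := hR I hIcard hzI
    rw [eval_RI] at h0
    have hterm : ∀ ν ∈ range ((I.card - 1) / 2 + 1),
        (∑ J ∈ powersetCard (I.card - 1 - 2 * ν) I, ∏ i ∈ J, v i) * (v z) ^ (2 * ν)
          = (n.choose (n - 1 - 2 * ν) : ℚ) * w ^ (n - 1) := by
      intro ν hν
      have hν' : 2 * ν ≤ n - 1 := by
        have := Finset.mem_range.mp hν; rw [hIcard] at this; omega
      have hinner : ∑ J ∈ powersetCard (I.card - 1 - 2 * ν) I, ∏ i ∈ J, v i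
          = (n.choose (n - 1 - 2 * ν) : ℚ) * w ^ (n - 1 - 2 * ν) := by
        rw [show ∑ J ∈ powersetCard (I.card - 1 - 2 * ν) I, ∏ i ∈ J, v i
            = ∑ J ∈ powersetCard (I.card - 1 - 2 * ν) I, w ^ (n - 1 - 2 * ν) from
          Finset.sum_congr rfl (fun J hJ => by
            obtain ⟨hJI, hJc⟩ := Finset.mem_powersetCard.mp hJ
            rw [Finset.prod_congr rfl (fun i hi => hIw i (hJI hi)), Finset.prod_const, hJc,
              hIcard])]
        rw [Finset.sum_const, Finset.card_powersetCard, hIcard, nsmul_eq_mul]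
      have hz2 : (v z) ^ (2 * ν) = w ^ (2 * ν) := by
        rw [pow_mul, pow_mul, hvz]
      rw [hinner, hz2, mul_assoc, ← pow_add]
      congr 2
      omega
    rw [Finset.sum_congr rfl hterm, ← Finset.sum_mul] at h0
    have hcoef : (0 : ℚ) < ∑ ν ∈ range ((I.card - 1) / 2 + 1), (n.choose (n - 1 - 2 * ν) : ℚ) := by
      apply Finset.sum_pos'
      · intro ν _; positivity
      · refine ⟨0, Finset.mem_range.mpr (by omega), ?_⟩
        have : 0 < n.choose (n - 1 - 2 * 0) := Nat.choose_pos (by omega)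
        exact_mod_cast this
    have hwpow : w ^ (n - 1) = 0 := by
      rcases mul_eq_zero.mp h0 with h | h
      · exact absurd h (ne_of_gt hcoef)
      · exact h
    exact pow_eq_zero_iff (by omega : n - 1 ≠ 0) |>.mp hwpow
  have hvo : v o = 0 := by
    rcases (by omega : n ≤ A.card ∨ n ≤ B.card) with hc | hc
    · obtain ⟨I, hIA, hIcard⟩ := Finset.exists_subset_card_eq hc
      have hzI : z ∉ I := fun hz =>
        (Finset.mem_erase.mp (Finset.mem_of_mem_filter _ (hIA hz))).1 rfl
      exact hmain (v o) I hIcard hzI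
        (fun i hi => (Finset.mem_filter.mp (hIA hi)).2) (hsq z o)
    · obtain ⟨I, hIB, hIcard⟩ := Finset.exists_subset_card_eq hc
      have hzI : z ∉ I := fun hz =>
        (Finset.mem_erase.mp (Finset.mem_of_mem_filter _ (hIB hz))).1 rfl
      have := hmain (- v o) I hIcard hzI
        (fun i hi => (Finset.mem_filter.mp (hIB hi)).2)
        (by rw [neg_pow]; simpa using hsq z o)
      linarith [this]
  funext j
  have := hsq j o
  rw [hvo] at this
  simpa using pow_eq_zero_iff (two_ne_zero) |>.mp (by simpa using this)

end Aux


open Aux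

set_option maxHeartbeats 1000000

/-- Theorem 6.1: the Chow rings 𝒜⁺ and 𝒜⁻ of the two small desingularizations are
not isomorphic as graded ℚ-algebras (n ≥ 3). -/
theorem stmt11 (n : ℕ) (hn : 3 ≤ n)
    (aP aM : Ideal (MvPolynomial (Fin (2 * n)) ℚ))
    (haP : aP = Ideal.span
      ({f | ∃ i j : Fin (2 * n), f = X i ^ 2 - X j ^ 2} ∪
       {f | ∃ I : Finset (Fin (2 * n)), I.card = n + 1 ∧
          (f = RI (X ⟨0, by omega⟩) I ∨ f = SI (X ⟨0, by omega⟩) I)} ∪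
       {f | ∃ I : Finset (Fin (2 * n)), I.card = n ∧ (⟨0, by omega⟩ : Fin (2 * n)) ∈ I ∧
          (f = RI (X ⟨0, by omega⟩) I ∨ f = SI (X ⟨0, by omega⟩) I)}))
    (haM : aM = Ideal.span
      ({f | ∃ i j : Fin (2 * n), f = X i ^ 2 - X j ^ 2} ∪
       {f | ∃ I : Finset (Fin (2 * n)), I.card = n + 1 ∧
          (f = RI (X ⟨0, by omega⟩) I ∨ f = SI (X ⟨0, by omega⟩) I)} ∪
       {f | ∃ I : Finset (Fin (2 * n)), I.card = n ∧ (⟨0, by omega⟩ : Fin (2 * n)) ∉ I ∧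
          (f = RI (X ⟨0, by omega⟩) I ∨ f = SI (X ⟨0, by omega⟩) I)})) :
    ¬∃ φ : (MvPolynomial (Fin (2 * n)) ℚ ⧸ aP) ≃ₐ[ℚ] (MvPolynomial (Fin (2 * n)) ℚ ⧸ aM),
      ∀ i : Fin (2 * n), φ (Ideal.Quotient.mk aP (X i)) ∈
        Submodule.span ℚ (Set.range fun j : Fin (2 * n) => Ideal.Quotient.mk aM (X j)) := by
  rintro ⟨φ, hφ⟩
  classical
  have hz2n : 0 < 2 * n := by omega
  set z : Fin (2 * n) := ⟨0, hz2n⟩ with hzdef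
  -- the two generating sets
  set SP : Set (MvPolynomial (Fin (2 * n)) ℚ) :=
      ({f | ∃ i j : Fin (2 * n), f = X i ^ 2 - X j ^ 2} ∪
       {f | ∃ I : Finset (Fin (2 * n)), I.card = n + 1 ∧
          (f = RI (X z) I ∨ f = SI (X z) I)} ∪
       {f | ∃ I : Finset (Fin (2 * n)), I.card = n ∧ z ∈ I ∧
          (f = RI (X z) I ∨ f = SI (X z) I)}) with hSPdef
  set SM : Set (MvPolynomial (Fin (2 * n)) ℚ) :=
      ({f | ∃ i j : Fin (2 * n), f = X i ^ 2 - X j ^ 2} ∪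
       {f | ∃ I : Finset (Fin (2 * n)), I.card = n + 1 ∧
          (f = RI (X z) I ∨ f = SI (X z) I)} ∪
       {f | ∃ I : Finset (Fin (2 * n)), I.card = n ∧ z ∉ I ∧
          (f = RI (X z) I ∨ f = SI (X z) I)}) with hSMdef
  have haP' : aP = Ideal.span SP := haP
  have haM' : aM = Ideal.span SM := haM
  clear haP haM
  -- homogeneity of generators, with degree ≥ 2
  have hgens : ∀ (S : Set (MvPolynomial (Fin (2 * n)) ℚ)), S = SP ∨ S = SM →
      ∀ g ∈ S, ∃ e, g.IsHomogeneous e ∧ 2 ≤ e := by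
    rintro S (rfl | rfl) g hg <;>
    · simp only [hSPdef, hSMdef, Set.mem_union, Set.mem_setOf_eq] at hg
      rcases hg with (⟨i, j, rfl⟩ | ⟨I, hI, (rfl | rfl)⟩) | ⟨I, hI, hzI, (rfl | rfl)⟩
      · exact ⟨2, (isHomogeneous_X_pow i 2).sub (isHomogeneous_X_pow j 2), le_refl 2⟩
      · refine ⟨n, ?_, by omega⟩
        have := RI_hom z I; rw [hI] at this; simpa using this
      · refine ⟨n + 1, ?_, by omega⟩
        have := SI_hom z I; rwa [hI] at this
      · refine ⟨n - 1, ?_, by omega⟩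
        have := RI_hom z I; rwa [hI] at this
      · refine ⟨n, ?_, by omega⟩
        have := SI_hom z I; rwa [hI] at this
  -- linear forms
  set lin : (Fin (2 * n) → ℚ) → MvPolynomial (Fin (2 * n)) ℚ :=
      fun b => ∑ j, C (b j) * X j with hlindef
  have hlin_hom : ∀ b, (lin b).IsHomogeneous 1 := fun b =>
    MvPolynomial.IsHomogeneous.sum _ _ _ (fun j _ => isHomogeneous_C_mul_X _ _)
  have heval_lin : ∀ (v : Fin (2 * n) → ℚ) b, eval v (lin b) = ∑ j, b j * v j := by
    intro v b; simp [hlindef]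
  -- linear independence of the X's modulo either ideal
  have hindep : ∀ (S : Set (MvPolynomial (Fin (2 * n)) ℚ)), S = SP ∨ S = SM →
      ∀ b : Fin (2 * n) → ℚ, lin b ∈ Ideal.span S → b = 0 := by
    intro S hS b hb
    funext m
    have hvan : ∀ g ∈ S, ∃ e, g.IsHomogeneous e ∧
        (e ≤ 1 → eval (Pi.single m 1 : Fin (2 * n) → ℚ) g = 0) := by
      intro g hg
      obtain ⟨e, he, he2⟩ := hgens S hS g hg
      exact ⟨e, he, fun h => by omega⟩
    have h := mem_hom_eval_zero hvan hb (hlin_hom b) le_rfl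
    rw [heval_lin] at h
    rw [Finset.sum_eq_single m (fun j _ hj => by
        rw [Pi.single_eq_of_ne hj, mul_zero]) (fun hm => absurd (Finset.mem_univ m) hm)] at h
    rw [Pi.single_eq_same, mul_one] at h
    simpa using h
  -- quotient of lin
  have hmk_lin : ∀ (a : Ideal (MvPolynomial (Fin (2 * n)) ℚ)) b,
      Ideal.Quotient.mk a (lin b) = ∑ j, b j • Ideal.Quotient.mk a (X j) := by
    intro a b
    rw [hlindef, map_sum]
    apply Finset.sum_congr rfl
    intro j _
    rw [← MvPolynomial.smul_eq_C_mul, ← Ideal.Quotient.mkₐ_eq_mk ℚ a, map_smul]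
  -- coefficients of the images of the X's
  have hc : ∀ i, ∃ cc : Fin (2 * n) → ℚ,
      ∑ k, cc k • (Ideal.Quotient.mk aM) (X k) = φ ((Ideal.Quotient.mk aP) (X i)) := fun i =>
    (Submodule.mem_span_range_iff_exists_fun ℚ).mp (hφ i)
  choose c hcspec using hc
  -- the matrix as a linear endomorphism
  set Mlin : (Fin (2 * n) → ℚ) →ₗ[ℚ] (Fin (2 * n) → ℚ) :=
    { toFun := fun b m => ∑ i, b i * c i m
      map_add' := by intro x y; funext m; simp [add_mul, Finset.sum_add_distrib]
      map_smul' := by intro r x; funext m; simp [Finset.mul_sum, mul_assoc] } with hMlindef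
  have hkey : ∀ b, Ideal.Quotient.mk aM (lin (Mlin b)) = φ (Ideal.Quotient.mk aP (lin b)) := by
    intro b
    rw [hmk_lin, hmk_lin]
    calc ∑ m, (Mlin b) m • Ideal.Quotient.mk aM (X m)
        = ∑ m, ∑ i, (b i * c i m) • Ideal.Quotient.mk aM (X m) := by
          apply Finset.sum_congr rfl; intro m _
          rw [show (Mlin b) m = ∑ i, b i * c i m from rfl, Finset.sum_smul]
      _ = ∑ i, ∑ m, (b i * c i m) • Ideal.Quotient.mk aM (X m) := Finset.sum_comm
      _ = ∑ i, b i • ∑ m, c i m • Ideal.Quotient.mk aM (X m) := by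
          apply Finset.sum_congr rfl; intro i _
          rw [Finset.smul_sum]
          apply Finset.sum_congr rfl; intro m _
          rw [mul_smul]
      _ = ∑ i, b i • φ (Ideal.Quotient.mk aP (X i)) := by
          apply Finset.sum_congr rfl; intro i _; rw [hcspec]
      _ = φ (∑ i, b i • Ideal.Quotient.mk aP (X i)) := by
          rw [map_sum]
          apply Finset.sum_congr rfl; intro i _
          rw [map_smul]
  have hMinj : Function.Injective Mlin := by
    rw [injective_iff_map_eq_zero]
    intro b hb0
    have h := hkey b
    rw [hb0] at h
    have hlin0 : lin (0 : Fin (2 * n) → ℚ) = 0 := by simp [hlindef]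
    rw [hlin0, map_zero] at h
    have h2 : Ideal.Quotient.mk aP (lin b) = 0 := φ.injective (by rw [← h, map_zero])
    have h3 : lin b ∈ aP := (Ideal.Quotient.eq_zero_iff_mem).mp h2
    exact hindep SP (Or.inl rfl) b (haP' ▸ h3)
  have hMsurj : Function.Surjective Mlin := LinearMap.injective_iff_surjective.mp hMinj
  choose Dv hDv using fun j => hMsurj (Pi.single j 1)
  set U : Fin (2 * n) → MvPolynomial (Fin (2 * n)) ℚ := fun j => lin (Dv j) with hUdef
  set Uev : MvPolynomial (Fin (2 * n)) ℚ →ₐ[ℚ] MvPolynomial (Fin (2 * n)) ℚ :=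
    aeval U with hUevdef
  have hUhom : ∀ j, (U j).IsHomogeneous 1 := fun j => hlin_hom (Dv j)
  have hlin_single : ∀ j : Fin (2 * n), lin (Pi.single j 1) = X j := by
    intro j
    simp only [hlindef]
    rw [Finset.sum_eq_single j (fun m _ hm => by
      rw [Pi.single_eq_of_ne hm, map_zero, zero_mul]) (fun hm => absurd (Finset.mem_univ j) hm)]
    rw [Pi.single_eq_same, map_one, one_mul]
  -- transport of relations
  have hPhiU : ∀ j, φ (Ideal.Quotient.mk aP (U j)) = Ideal.Quotient.mk aM (X j) := by
    intro j
    rw [hUdef]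
    rw [← hkey (Dv j), hDv j, hlin_single j]
  have htransport : ∀ g ∈ aM, Uev g ∈ aP := by
    have hcomp : (φ.toAlgHom.comp ((Ideal.Quotient.mkₐ ℚ aP).comp Uev))
        = Ideal.Quotient.mkₐ ℚ aM := by
      apply MvPolynomial.algHom_ext
      intro j
      simp only [hUevdef, AlgHom.comp_apply, aeval_X, Ideal.Quotient.mkₐ_eq_mk,
        AlgEquiv.toAlgHom_eq_coe, AlgHom.coe_coe]
      exact hPhiU j
    intro g hg
    have h1 : Ideal.Quotient.mkₐ ℚ aM g = 0 := by
      rw [Ideal.Quotient.mkₐ_eq_mk]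
      exact (Ideal.Quotient.eq_zero_iff_mem).mpr hg
    have h2 := congrArg (fun f => f g) hcomp
    simp only [AlgHom.comp_apply, AlgEquiv.toAlgHom_eq_coe, AlgHom.coe_coe,
      Ideal.Quotient.mkₐ_eq_mk] at h2
    rw [Ideal.Quotient.mkₐ_eq_mk] at h1
    have h3 : Ideal.Quotient.mk aP (Uev g) = 0 := φ.injective (by
      rw [map_zero]; exact h2.trans h1)
    exact (Ideal.Quotient.eq_zero_iff_mem).mp h3
  -- sign vectors
  set εs : Fin (2 * n) → Fin (2 * n) → ℚ :=
    fun k m => if m = z ∨ m = k then 1 else -1 with hεdef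
  have hεpm : ∀ k m, εs k m = 1 ∨ εs k m = -1 := by
    intro k m
    by_cases h : m = z ∨ m = k
    · left; simp [hεdef, h]
    · right; simp [hεdef, h]
  have hεz : ∀ k, εs k z = 1 := by intro k; simp [hεdef]
  have hεsq : ∀ k m, (εs k m) ^ 2 = 1 := by
    intro k m
    rcases hεpm k m with h | h <;> rw [h] <;> norm_num
  -- the vanishing data for SP at εs k
  have hSPvan : ∀ k, ∀ g ∈ SP, ∃ e, g.IsHomogeneous e ∧
      (e ≤ n - 1 → eval (εs k) g = 0) := by
    intro k g hg
    simp only [hSPdef, Set.mem_union, Set.mem_setOf_eq] at hg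
    rcases hg with (⟨i, j, rfl⟩ | ⟨I, hI, (rfl | rfl)⟩) | ⟨I, hI, hzI, (rfl | rfl)⟩
    · refine ⟨2, (isHomogeneous_X_pow i 2).sub (isHomogeneous_X_pow j 2), fun _ => ?_⟩
      rw [map_sub, map_pow, map_pow, eval_X, eval_X, hεsq, hεsq, sub_self]
    · refine ⟨n, ?_, fun h => by omega⟩
      have := RI_hom z I; rw [hI] at this; simpa using this
    · refine ⟨n + 1, ?_, fun h => by omega⟩
      have := SI_hom z I; rwa [hI] at this
    · refine ⟨n - 1, ?_, fun _ => ?_⟩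
      · have := RI_hom z I; rwa [hI] at this
      · refine evalRI_zero (εs k) z (hεz k) I ⟨z, hzI, hεz k⟩ ?_
        by_contra hcon
        push_neg at hcon
        have hsub : I ⊆ insert z {k} := by
          intro i hi
          by_cases h : i = z ∨ i = k
          · rcases h with h | h
            · exact Finset.mem_insert.mpr (Or.inl h)
            · exact Finset.mem_insert.mpr (Or.inr (Finset.mem_singleton.mpr h))
          · exact absurd (by simp [hεdef, h] : εs k i = -1) (hcon i hi)
        have hcard2 : I.card ≤ 2 := by
          calc I.card ≤ (insert z ({k} : Finset (Fin (2 * n)))).card := Finset.card_le_card hsub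
          _ ≤ ({k} : Finset (Fin (2 * n))).card + 1 := Finset.card_insert_le _ _
          _ = 2 := by rw [Finset.card_singleton]
        omega
    · refine ⟨n, ?_, fun h => by omega⟩
      have := SI_hom z I; rwa [hI] at this
  -- composition of evaluations
  have hcomp_eval : ∀ (w : Fin (2 * n) → ℚ) (g : MvPolynomial (Fin (2 * n)) ℚ),
      eval w (Uev g) = eval (fun m => eval w (U m)) g := by
    intro w g
    have h : (eval w).comp (Uev : MvPolynomial (Fin (2 * n)) ℚ →+* MvPolynomial (Fin (2 * n)) ℚ)
        = eval (fun m => eval w (U m)) := by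
      apply MvPolynomial.ringHom_ext
      · intro r; simp [hUevdef]
      · intro m; simp [hUevdef]
    have := RingHom.congr_fun h g
    simpa using this
  -- for each k, the vector of evaluations is killed
  have hUzero : ∀ k m, eval (εs k) (U m) = 0 := by
    intro k
    set v : Fin (2 * n) → ℚ := fun m => eval (εs k) (U m) with hvdef
    have hsq : ∀ i j, v i ^ 2 = v j ^ 2 := by
      intro i j
      have hmem : (X i ^ 2 - X j ^ 2 : MvPolynomial (Fin (2 * n)) ℚ) ∈ aM := by
        rw [haM']
        apply Ideal.subset_span
        simp only [hSMdef, Set.mem_union, Set.mem_setOf_eq]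
        exact Or.inl (Or.inl ⟨i, j, rfl⟩)
      have htr := htransport _ hmem
      have hUev_sub : Uev (X i ^ 2 - X j ^ 2) = (U i) ^ 2 - (U j) ^ 2 := by
        rw [hUevdef, map_sub, map_pow, map_pow, aeval_X, aeval_X]
      have hhom : (Uev (X i ^ 2 - X j ^ 2)).IsHomogeneous 2 := by
        rw [hUev_sub]
        have h1 := (hUhom i).pow 2
        have h2 := (hUhom j).pow 2
        rw [one_mul] at h1 h2
        exact h1.sub h2
      have heval := mem_hom_eval_zero (hSPvan k) (haP' ▸ htr) hhom (by omega)
      rw [hUev_sub, map_sub, map_pow, map_pow] at heval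
      have : v i ^ 2 - v j ^ 2 = 0 := heval
      linarith
    have hRv : ∀ I : Finset (Fin (2 * n)), I.card = n → z ∉ I → eval v (RI (X z) I) = 0 := by
      intro I hIcard hzI
      have hmem : (RI (X z) I : MvPolynomial (Fin (2 * n)) ℚ) ∈ aM := by
        rw [haM']
        apply Ideal.subset_span
        simp only [hSMdef, Set.mem_union, Set.mem_setOf_eq]
        exact Or.inr ⟨I, hIcard, hzI, Or.inl rfl⟩
      have htr := htransport _ hmem
      have hhom : (Uev (RI (X z) I)).IsHomogeneous (n - 1) := by
        have := (RI_hom z I).aeval U hUhom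
        rw [hIcard, one_mul] at this
        exact this
      have heval := mem_hom_eval_zero (hSPvan k) (haP' ▸ htr) hhom le_rfl
      rw [hcomp_eval] at heval
      exact heval
    have hv0 : v = 0 := signs hn z z v hsq hRv
    intro m
    exact congrFun hv0 m
  -- extract that Dv z = 0
  have hb : ∀ k, ∑ j, Dv z j * εs k j = 0 := by
    intro k
    have := hUzero k z
    simp only [hUdef] at this
    rw [heval_lin] at this
    exact this
  have hbk : ∀ k, k ≠ z → Dv z k = 0 := by
    intro k hk
    have h1 := hb k
    have h2 := hb z
    have hterm : ∀ j ∈ Finset.univ, (Dv z j * εs k j - Dv z j * εs z j)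
        = (if j = k then 2 * Dv z j else 0) := by
      intro j _
      by_cases hj : j = k
      · have e1 : εs k j = 1 := by simp [hεdef, hj]
        have e2 : εs z j = -1 := by simp [hεdef, hj, hk]
        rw [if_pos hj, e1, e2]; ring
      · rw [if_neg hj]
        by_cases hjz : j = z
        · have e1 : εs k j = 1 := by simp [hεdef, hjz]
          have e2 : εs z j = 1 := by simp [hεdef, hjz]
          rw [e1, e2]; ring
        · have e1 : εs k j = -1 := by simp [hεdef, hjz, hj]
          have e2 : εs z j = -1 := by simp [hεdef, hjz]
          rw [e1, e2]; ring
    have h3 : ∑ j, (Dv z j * εs k j - Dv z j * εs z j) = 2 * Dv z k := by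
      rw [Finset.sum_congr rfl hterm]
      simp
    rw [Finset.sum_sub_distrib, h1, h2, sub_self] at h3
    linarith
  have hbz : Dv z z = 0 := by
    have h2 := hb z
    rw [Finset.sum_eq_single z (fun j _ hj => by rw [hbk j hj, zero_mul])
      (fun hm => absurd (Finset.mem_univ z) hm)] at h2
    rw [hεz, mul_one] at h2
    exact h2
  have hDvz : Dv z = 0 := by
    funext j
    by_cases hj : j = z
    · rw [hj]; exact hbz
    · exact hbk j hj
  have hfinal := hDv z
  rw [hDvz, map_zero] at hfinal
  have := congrFun hfinal z
  rw [Pi.single_eq_same] at this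
  exact one_ne_zero this.symm

end
end

section
/- Let n = 3, P = ℚ[X₁,…,X₆], and for I ⊆ {1,…,6} with |I| = k set R_I = ∑_{ν=0}^{⌊(k−1)/2⌋} e_{k−1−2ν}(Xᵢ : i∈I)·X₁^{2ν} and S_I = ∑_{ν=0}^{⌊k/2⌋} e_{k−2ν}(Xᵢ : i∈I)·X₁^{2ν}. Let 𝔞⁻ be the ideal of P generated by all Xᵢ² − Xⱼ², all R_I, S_I with |I| = 4, and all R_I, S_I with |I| = 3 and 1 ∉ I. Then in 𝒜⁻ = P/𝔞⁻ the class of X₂ + X₃ + X₄ + X₅ is non-zero but its square is zero, i.e. (X₂+X₃+X₄+X₅)² ∈ 𝔞⁻ and X₂+X₃+X₄+X₅ ∉ 𝔞⁻. -/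
open MvPolynomial Finset

noncomputable section

/-- Evaluation at Xᵢ ↦ ε in the dual numbers. -/
abbrev auxPhi : MvPolynomial (Fin 6) ℚ →ₐ[ℚ] DualNumber ℚ :=
  aeval (fun _ => DualNumber.eps)

lemma aux_eps_pow {n : ℕ} (hn : 2 ≤ n) : (DualNumber.eps : DualNumber ℚ) ^ n = 0 := by
  obtain ⟨m, rfl⟩ := Nat.exists_eq_add_of_le hn
  rw [pow_add, pow_two, DualNumber.eps_mul_eps, zero_mul]

lemma aux_phi_term (I : Finset (Fin 6)) (j ν : ℕ) (h : 2 ≤ j + 2 * ν) :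
    auxPhi (esF I j * X 0 ^ (2 * ν)) = 0 := by
  rw [map_mul, esF, map_sum]
  have hc : ∀ J ∈ powersetCard j I, auxPhi (∏ i ∈ J, X i) = DualNumber.eps ^ j := by
    intro J hJ
    rw [map_prod]
    simp only [auxPhi, aeval_X, Finset.prod_const]
    rw [(Finset.mem_powersetCard.mp hJ).2]
  rw [Finset.sum_congr rfl hc, Finset.sum_const, map_pow, aeval_X]
  rw [smul_mul_assoc, ← pow_add, aux_eps_pow h, smul_zero]

lemma aux_phi_RI (I : Finset (Fin 6)) (h : 3 ≤ I.card) : auxPhi (RI (X 0) I) = 0 := by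
  rw [RI, map_sum]
  refine Finset.sum_eq_zero fun ν hν => ?_
  have hν' := Finset.mem_range.mp hν
  exact aux_phi_term I _ ν (by omega)

lemma aux_phi_SI (I : Finset (Fin 6)) (h : 2 ≤ I.card) : auxPhi (SI (X 0) I) = 0 := by
  rw [SI, map_sum]
  refine Finset.sum_eq_zero fun ν hν => ?_
  have hν' := Finset.mem_range.mp hν
  exact aux_phi_term I _ ν (by omega)

lemma aux_RI_123 : RI (X 0) ({1,2,3} : Finset (Fin 6)) =
    X 1 * X 2 + X 1 * X 3 + X 2 * X 3 + X 0 ^ 2 := by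
  rw [RI, show ({1,2,3} : Finset (Fin 6)).card = 3 from by decide]
  rw [show (3-1)/2+1 = 2 from rfl, Finset.sum_range_succ, Finset.sum_range_succ,
    Finset.sum_range_zero]
  rw [esF, esF,
    show powersetCard (3-1-2*0) ({1,2,3} : Finset (Fin 6)) = {{1,2},{1,3},{2,3}} from by decide,
    show powersetCard (3-1-2*1) ({1,2,3} : Finset (Fin 6)) = {∅} from by decide]
  rw [Finset.sum_insert (by decide), Finset.sum_insert (by decide), Finset.sum_singleton,
    Finset.sum_singleton, Finset.prod_insert (by decide), Finset.prod_insert (by decide),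
    Finset.prod_insert (by decide), Finset.prod_empty]
  simp only [Finset.prod_singleton]
  ring

lemma aux_RI_124 : RI (X 0) ({1,2,4} : Finset (Fin 6)) =
    X 1 * X 2 + X 1 * X 4 + X 2 * X 4 + X 0 ^ 2 := by
  rw [RI, show ({1,2,4} : Finset (Fin 6)).card = 3 from by decide]
  rw [show (3-1)/2+1 = 2 from rfl, Finset.sum_range_succ, Finset.sum_range_succ,
    Finset.sum_range_zero]
  rw [esF, esF,
    show powersetCard (3-1-2*0) ({1,2,4} : Finset (Fin 6)) = {{1,2},{1,4},{2,4}} from by decide,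
    show powersetCard (3-1-2*1) ({1,2,4} : Finset (Fin 6)) = {∅} from by decide]
  rw [Finset.sum_insert (by decide), Finset.sum_insert (by decide), Finset.sum_singleton,
    Finset.sum_singleton, Finset.prod_insert (by decide), Finset.prod_insert (by decide),
    Finset.prod_insert (by decide), Finset.prod_empty]
  simp only [Finset.prod_singleton]
  ring

lemma aux_RI_134 : RI (X 0) ({1,3,4} : Finset (Fin 6)) =
    X 1 * X 3 + X 1 * X 4 + X 3 * X 4 + X 0 ^ 2 := by
  rw [RI, show ({1,3,4} : Finset (Fin 6)).card = 3 from by decide]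
  rw [show (3-1)/2+1 = 2 from rfl, Finset.sum_range_succ, Finset.sum_range_succ,
    Finset.sum_range_zero]
  rw [esF, esF,
    show powersetCard (3-1-2*0) ({1,3,4} : Finset (Fin 6)) = {{1,3},{1,4},{3,4}} from by decide,
    show powersetCard (3-1-2*1) ({1,3,4} : Finset (Fin 6)) = {∅} from by decide]
  rw [Finset.sum_insert (by decide), Finset.sum_insert (by decide), Finset.sum_singleton,
    Finset.sum_singleton, Finset.prod_insert (by decide), Finset.prod_insert (by decide),
    Finset.prod_insert (by decide), Finset.prod_empty]
  simp only [Finset.prod_singleton]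
  ring

lemma aux_RI_234 : RI (X 0) ({2,3,4} : Finset (Fin 6)) =
    X 2 * X 3 + X 2 * X 4 + X 3 * X 4 + X 0 ^ 2 := by
  rw [RI, show ({2,3,4} : Finset (Fin 6)).card = 3 from by decide]
  rw [show (3-1)/2+1 = 2 from rfl, Finset.sum_range_succ, Finset.sum_range_succ,
    Finset.sum_range_zero]
  rw [esF, esF,
    show powersetCard (3-1-2*0) ({2,3,4} : Finset (Fin 6)) = {{2,3},{2,4},{3,4}} from by decide,
    show powersetCard (3-1-2*1) ({2,3,4} : Finset (Fin 6)) = {∅} from by decide]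
  rw [Finset.sum_insert (by decide), Finset.sum_insert (by decide), Finset.sum_singleton,
    Finset.sum_singleton, Finset.prod_insert (by decide), Finset.prod_insert (by decide),
    Finset.prod_insert (by decide), Finset.prod_empty]
  simp only [Finset.prod_singleton]
  ring

/-- First half of the n = 3 case of Theorem 6.1: in 𝒜⁻ the class of
X₂ + X₃ + X₄ + X₅ is a non-zero 2-nilpotent element of degree 1. -/
theorem stmt12 (aM : Ideal (MvPolynomial (Fin 6) ℚ))
    (haM : aM = Ideal.span
      ({f | ∃ i j : Fin 6, f = X i ^ 2 - X j ^ 2} ∪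
       {f | ∃ I : Finset (Fin 6), I.card = 4 ∧ (f = RI (X 0) I ∨ f = SI (X 0) I)} ∪
       {f | ∃ I : Finset (Fin 6), I.card = 3 ∧ (0 : Fin 6) ∉ I ∧
          (f = RI (X 0) I ∨ f = SI (X 0) I)})) :
    (X 1 + X 2 + X 3 + X 4 : MvPolynomial (Fin 6) ℚ) ^ 2 ∈ aM ∧
    (X 1 + X 2 + X 3 + X 4 : MvPolynomial (Fin 6) ℚ) ∉ aM := by
  constructor
  · -- membership of the square
    have hsq : (X 1 + X 2 + X 3 + X 4 : MvPolynomial (Fin 6) ℚ) ^ 2 =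
        ((X 1 ^ 2 - X 0 ^ 2) + (X 2 ^ 2 - X 0 ^ 2) + (X 3 ^ 2 - X 0 ^ 2) + (X 4 ^ 2 - X 0 ^ 2))
        + (RI (X 0) {1,2,3} + RI (X 0) {1,2,4} + RI (X 0) {1,3,4} + RI (X 0) {2,3,4}) := by
      rw [aux_RI_123, aux_RI_124, aux_RI_134, aux_RI_234]; ring
    rw [hsq, haM]
    have hXd : ∀ i j : Fin 6, (X i ^ 2 - X j ^ 2 : MvPolynomial (Fin 6) ℚ) ∈
        Ideal.span ({f | ∃ i j : Fin 6, f = X i ^ 2 - X j ^ 2} ∪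
         {f | ∃ I : Finset (Fin 6), I.card = 4 ∧ (f = RI (X 0) I ∨ f = SI (X 0) I)} ∪
         {f | ∃ I : Finset (Fin 6), I.card = 3 ∧ (0 : Fin 6) ∉ I ∧
            (f = RI (X 0) I ∨ f = SI (X 0) I)}) := fun i j =>
      Ideal.subset_span (Set.mem_union_left _ (Set.mem_union_left _ ⟨i, j, rfl⟩))
    have hR : ∀ I : Finset (Fin 6), I.card = 3 → (0 : Fin 6) ∉ I →
        (RI (X 0) I : MvPolynomial (Fin 6) ℚ) ∈
        Ideal.span ({f | ∃ i j : Fin 6, f = X i ^ 2 - X j ^ 2} ∪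
         {f | ∃ I : Finset (Fin 6), I.card = 4 ∧ (f = RI (X 0) I ∨ f = SI (X 0) I)} ∪
         {f | ∃ I : Finset (Fin 6), I.card = 3 ∧ (0 : Fin 6) ∉ I ∧
            (f = RI (X 0) I ∨ f = SI (X 0) I)}) := fun I h3 h0 =>
      Ideal.subset_span (Set.mem_union_right _ ⟨I, h3, h0, Or.inl rfl⟩)
    exact add_mem
      (add_mem (add_mem (add_mem (hXd 1 0) (hXd 2 0)) (hXd 3 0)) (hXd 4 0))
      (add_mem (add_mem (add_mem (hR {1,2,3} (by decide) (by decide))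
        (hR {1,2,4} (by decide) (by decide))) (hR {1,3,4} (by decide) (by decide)))
        (hR {2,3,4} (by decide) (by decide)))
  · -- non-membership
    intro hmem
    have hker : aM ≤ RingHom.ker (auxPhi : MvPolynomial (Fin 6) ℚ →ₐ[ℚ] DualNumber ℚ).toRingHom := by
      rw [haM, Ideal.span_le]
      intro f hf
      rw [SetLike.mem_coe, RingHom.mem_ker]
      simp only [Set.mem_union, Set.mem_setOf_eq] at hf
      rcases hf with (⟨i, j, rfl⟩ | ⟨I, hI, (rfl | rfl)⟩) | ⟨I, hI, h0, (rfl | rfl)⟩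
      · show auxPhi _ = 0
        rw [map_sub, map_pow, map_pow, aeval_X, aeval_X, sub_self]
      · exact aux_phi_RI I (by omega)
      · exact aux_phi_SI I (by omega)
      · exact aux_phi_RI I (by omega)
      · exact aux_phi_SI I (by omega)
    have h0 : auxPhi (X 1 + X 2 + X 3 + X 4 : MvPolynomial (Fin 6) ℚ) = 0 := hker hmem
    have h2 := congrArg TrivSqZeroExt.snd h0
    simp only [auxPhi, map_add, aeval_X, TrivSqZeroExt.snd_add, TrivSqZeroExt.snd_zero,
      DualNumber.eps, TrivSqZeroExt.snd_inr] at h2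
    norm_num at h2

end
end

section
/- Let n = 3, P = ℚ[X₁,…,X₆], and for I ⊆ {1,…,6} with |I| = k set R_I = ∑_{ν=0}^{⌊(k−1)/2⌋} e_{k−1−2ν}(Xᵢ : i∈I)·X₁^{2ν} and S_I = ∑_{ν=0}^{⌊k/2⌋} e_{k−2ν}(Xᵢ : i∈I)·X₁^{2ν}. Let 𝔞⁺ be the ideal of P generated by all Xᵢ² − Xⱼ², all R_I, S_I with |I| = 4, and all R_I, S_I with |I| = 3 and 1 ∈ I. Then for every a₁,…,a₆ ∈ ℚ, if (a₁X₁ + ⋯ + a₆X₆)² ∈ 𝔞⁺ then a₁ = ⋯ = a₆ = 0. -/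
set_option maxRecDepth 8000


open MvPolynomial Finset

noncomputable section

/-- The substitution Xᵢ ↦ bᵢ·t into ℚ[t]. -/
def ψ (b : Fin 6 → ℚ) : MvPolynomial (Fin 6) ℚ →ₐ[ℚ] Polynomial ℚ :=
  MvPolynomial.aeval (fun i => Polynomial.C (b i) * Polynomial.X)

def eV (b : Fin 6 → ℚ) (I : Finset (Fin 6)) (j : ℕ) : ℚ :=
  ∑ J ∈ powersetCard j I, ∏ i ∈ J, b i

def Rval (b : Fin 6 → ℚ) (I : Finset (Fin 6)) : ℚ :=
  ∑ ν ∈ range ((I.card - 1) / 2 + 1), eV b I (I.card - 1 - 2 * ν) * (b 0) ^ (2 * ν)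

def Sval (b : Fin 6 → ℚ) (I : Finset (Fin 6)) : ℚ :=
  ∑ ν ∈ range (I.card / 2 + 1), eV b I (I.card - 2 * ν) * (b 0) ^ (2 * ν)

def RvalZ (b : Fin 6 → ℤ) (I : Finset (Fin 6)) : ℤ :=
  ∑ ν ∈ range ((I.card - 1) / 2 + 1),
    (∑ J ∈ powersetCard (I.card - 1 - 2 * ν) I, ∏ i ∈ J, b i) * (b 0) ^ (2 * ν)

lemma psi_esF (b : Fin 6 → ℚ) (I : Finset (Fin 6)) (j : ℕ) :
    ψ b (esF I j) = Polynomial.C (∑ J ∈ powersetCard j I, ∏ i ∈ J, b i) * Polynomial.X ^ j := by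
  simp only [esF, map_sum, map_prod, ψ, MvPolynomial.aeval_X, Finset.sum_mul]
  refine Finset.sum_congr rfl fun J hJ => ?_
  rw [Finset.prod_mul_distrib, Finset.prod_const, (Finset.mem_powersetCard.1 hJ).2]

lemma psi_RI (b : Fin 6 → ℚ) (I : Finset (Fin 6)) :
    ψ b (RI (MvPolynomial.X 0) I) = Polynomial.C (Rval b I) * Polynomial.X ^ (I.card - 1) := by
  have hb : ψ b (MvPolynomial.X 0) = Polynomial.C (b 0) * Polynomial.X := by simp [ψ]
  simp only [RI, map_sum, map_mul, map_pow, psi_esF, Rval, eV, Finset.sum_mul, hb, mul_pow]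
  refine Finset.sum_congr rfl fun ν hν => ?_
  refine Finset.sum_congr rfl fun J hJ => ?_
  have h2 : 2 * ν ≤ I.card - 1 := by
    have := Finset.mem_range.1 hν; omega
  calc Polynomial.C (∏ i ∈ J, b i) * Polynomial.X ^ (I.card - 1 - 2 * ν) *
        (Polynomial.C (b 0) ^ (2 * ν) * Polynomial.X ^ (2 * ν))
      = Polynomial.C (∏ i ∈ J, b i) * Polynomial.C (b 0) ^ (2 * ν) *
        (Polynomial.X ^ (I.card - 1 - 2 * ν) * Polynomial.X ^ (2 * ν)) := by ring
    _ = _ := by rw [← pow_add, Nat.sub_add_cancel h2]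

lemma psi_SI (b : Fin 6 → ℚ) (I : Finset (Fin 6)) :
    ψ b (SI (MvPolynomial.X 0) I) = Polynomial.C (Sval b I) * Polynomial.X ^ I.card := by
  have hb : ψ b (MvPolynomial.X 0) = Polynomial.C (b 0) * Polynomial.X := by simp [ψ]
  simp only [SI, map_sum, map_mul, map_pow, psi_esF, Sval, eV, Finset.sum_mul, hb, mul_pow]
  refine Finset.sum_congr rfl fun ν hν => ?_
  refine Finset.sum_congr rfl fun J hJ => ?_
  have h2 : 2 * ν ≤ I.card := by
    have := Finset.mem_range.1 hν; omega
  calc Polynomial.C (∏ i ∈ J, b i) * Polynomial.X ^ (I.card - 2 * ν) *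
        (Polynomial.C (b 0) ^ (2 * ν) * Polynomial.X ^ (2 * ν))
      = Polynomial.C (∏ i ∈ J, b i) * Polynomial.C (b 0) ^ (2 * ν) *
        (Polynomial.X ^ (I.card - 2 * ν) * Polynomial.X ^ (2 * ν)) := by ring
    _ = _ := by rw [← pow_add, Nat.sub_add_cancel h2]

lemma Rval_cast (b : Fin 6 → ℤ) (I : Finset (Fin 6)) :
    Rval (fun i => (b i : ℚ)) I = (RvalZ b I : ℚ) := by
  simp only [Rval, RvalZ, eV]
  push_cast
  rfl

/-- The key lemma: evaluation at an admissible integer sign vector kills the ideal up to t³,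
hence the square of the linear form evaluates to 0. -/
lemma key (b : Fin 6 → ℤ) (hsq : ∀ i, b i ^ 2 = 1)
    (hR3 : ∀ I : Finset (Fin 6), I.card = 3 → (0 : Fin 6) ∈ I → RvalZ b I = 0)
    (a : Fin 6 → ℚ)
    (h : (∑ i, C (a i) * X i) ^ 2 ∈ Ideal.span
      ({f | ∃ i j : Fin 6, f = X i ^ 2 - X j ^ 2} ∪
       {f | ∃ I : Finset (Fin 6), I.card = 4 ∧ (f = RI (X 0) I ∨ f = SI (X 0) I)} ∪
       {f | ∃ I : Finset (Fin 6), I.card = 3 ∧ (0 : Fin 6) ∈ I ∧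
          (f = RI (X 0) I ∨ f = SI (X 0) I)})) :
    ∑ i, a i * (b i : ℚ) = 0 := by
  set bQ : Fin 6 → ℚ := fun i => (b i : ℚ) with hbQ
  have hgen : ∀ f ∈
      ({f | ∃ i j : Fin 6, f = X i ^ 2 - X j ^ 2} ∪
       {f | ∃ I : Finset (Fin 6), I.card = 4 ∧ (f = RI (X 0) I ∨ f = SI (X 0) I)} ∪
       {f | ∃ I : Finset (Fin 6), I.card = 3 ∧ (0 : Fin 6) ∈ I ∧
          (f = RI (X 0) I ∨ f = SI (X 0) I)} : Set (MvPolynomial (Fin 6) ℚ)),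
      ψ bQ f ∈ Ideal.span {Polynomial.X ^ 3} := by
    rintro f (( ⟨i, j, rfl⟩ | ⟨I, hI4, hf⟩ ) | ⟨I, hI3, h0I, hf⟩)
    · have e : ψ bQ (X i ^ 2 - X j ^ 2)
          = Polynomial.C (bQ i ^ 2 - bQ j ^ 2) * Polynomial.X ^ 2 := by
        simp only [map_sub, map_pow, ψ, MvPolynomial.aeval_X, map_sub, map_pow, mul_pow]
        ring
      have hz : bQ i ^ 2 - bQ j ^ 2 = 0 := by
        simp only [hbQ]
        rw [← Int.cast_pow, ← Int.cast_pow, hsq i, hsq j]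
        ring
      rw [e, hz, map_zero, zero_mul]
      exact Ideal.zero_mem _
    · rcases hf with rfl | rfl
      · rw [psi_RI, hI4]
        exact Ideal.mem_span_singleton'.2 ⟨Polynomial.C (Rval bQ I), by ring⟩
      · rw [psi_SI, hI4]
        exact Ideal.mem_span_singleton'.2 ⟨Polynomial.C (Sval bQ I) * Polynomial.X, by ring⟩
    · rcases hf with rfl | rfl
      · rw [psi_RI, hI3]
        have : Rval bQ I = 0 := by
          rw [hbQ, Rval_cast, hR3 I hI3 h0I, Int.cast_zero]
        rw [this, map_zero, zero_mul]
        exact Ideal.zero_mem _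
      · rw [psi_SI, hI3]
        exact Ideal.mem_span_singleton'.2 ⟨Polynomial.C (Sval bQ I), by ring⟩
  have hle : Ideal.span
      ({f | ∃ i j : Fin 6, f = X i ^ 2 - X j ^ 2} ∪
       {f | ∃ I : Finset (Fin 6), I.card = 4 ∧ (f = RI (X 0) I ∨ f = SI (X 0) I)} ∪
       {f | ∃ I : Finset (Fin 6), I.card = 3 ∧ (0 : Fin 6) ∈ I ∧
          (f = RI (X 0) I ∨ f = SI (X 0) I)})
      ≤ Ideal.comap (ψ bQ) (Ideal.span {Polynomial.X ^ 3}) := by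
    rw [Ideal.span_le]
    intro f hf
    exact hgen f hf
  have hmem : ψ bQ ((∑ i, C (a i) * X i) ^ 2) ∈ Ideal.span {Polynomial.X ^ 3} :=
    Ideal.mem_comap.1 (hle h)
  have hlin : ψ bQ (∑ i, C (a i) * X i)
      = Polynomial.C (∑ i, a i * bQ i) * Polynomial.X := by
    simp only [map_sum, map_mul, ψ, MvPolynomial.aeval_X, MvPolynomial.aeval_C,
      Polynomial.algebraMap_eq, map_sum, Finset.sum_mul]
    refine Finset.sum_congr rfl fun i _ => ?_
    ring
  rw [map_pow, hlin, mul_pow, ← Polynomial.C_pow] at hmem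
  obtain ⟨q, hq⟩ := Ideal.mem_span_singleton'.1 hmem
  have hc2 : (Polynomial.C ((∑ i, a i * bQ i) ^ 2) * Polynomial.X ^ 2).coeff 2 = 0 := by
    rw [← hq, Polynomial.coeff_mul_X_pow']
    norm_num
  rw [Polynomial.coeff_C_mul, Polynomial.coeff_X_pow] at hc2
  norm_num at hc2
  exact hc2

/-- Second half of the n = 3 case of Theorem 6.1: the ring 𝒜⁺ contains no non-zero
2-nilpotent homogeneous element of degree 1. -/
theorem stmt13 (aP : Ideal (MvPolynomial (Fin 6) ℚ))
    (haP : aP = Ideal.span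
      ({f | ∃ i j : Fin 6, f = X i ^ 2 - X j ^ 2} ∪
       {f | ∃ I : Finset (Fin 6), I.card = 4 ∧ (f = RI (X 0) I ∨ f = SI (X 0) I)} ∪
       {f | ∃ I : Finset (Fin 6), I.card = 3 ∧ (0 : Fin 6) ∈ I ∧
          (f = RI (X 0) I ∨ f = SI (X 0) I)})) :
    ∀ a : Fin 6 → ℚ, (∑ i, C (a i) * X i) ^ 2 ∈ aP → ∀ i, a i = 0 := by
  subst haP
  intro a h i
  have h0 := key ![1,-1,-1,-1,-1,-1] (by decide) (by decide) a h
  have h1 := key ![1,1,-1,-1,-1,-1] (by decide) (by decide) a h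
  have h2 := key ![1,-1,1,-1,-1,-1] (by decide) (by decide) a h
  have h3 := key ![1,-1,-1,1,-1,-1] (by decide) (by decide) a h
  have h4 := key ![1,-1,-1,-1,1,-1] (by decide) (by decide) a h
  have h5 := key ![1,-1,-1,-1,-1,1] (by decide) (by decide) a h
  have v0 : (![1,-1,-1,-1,-1,-1] : Fin 6 → ℤ) 5 = -1 := rfl
  have v1 : (![1,1,-1,-1,-1,-1] : Fin 6 → ℤ) 5 = -1 := rfl
  have v2 : (![1,-1,1,-1,-1,-1] : Fin 6 → ℤ) 5 = -1 := rfl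
  have v3 : (![1,-1,-1,1,-1,-1] : Fin 6 → ℤ) 5 = -1 := rfl
  have v4 : (![1,-1,-1,-1,1,-1] : Fin 6 → ℤ) 5 = -1 := rfl
  have v5 : (![1,-1,-1,-1,-1,1] : Fin 6 → ℤ) 5 = 1 := rfl
  norm_num [Fin.sum_univ_six, Matrix.cons_val_zero, Matrix.cons_val_one, Matrix.head_cons,
    Matrix.cons_val_succ, Matrix.cons_val_two, Matrix.cons_val_three, Matrix.cons_val_four,
    Matrix.tail_cons, v0, v1, v2, v3, v4, v5] at h0 h1 h2 h3 h4 h5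
  have e0 : a 0 = 0 := by linarith
  have e1 : a 1 = 0 := by linarith
  have e2 : a 2 = 0 := by linarith
  have e3 : a 3 = 0 := by linarith
  have e4 : a 4 = 0 := by linarith
  have e5 : a 5 = 0 := by linarith
  fin_cases i
  · exact e0
  · exact e1
  · exact e2
  · exact e3
  · exact e4
  · exact e5

end
end
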